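/- arXiv:2204.06051 — 13 statements merged into one kernel-verified Lean document; each statement's English description precedes it below -/
import Mathlib

section
/- Let ⊗ and ⊕ be uninorms on [0,1]. Then (⊗, ⊕) satisfies the rearrangement inequality (for all n, all sorted sequences x₁≤…≤xₙ and y₁≤…≤yₙ in [0,1], and all permutations σ, the sum ⊕ᵢ (x_{σ(i)} ⊗ yᵢ) is at most ⊕ᵢ (xᵢ ⊗ yᵢ) and at least ⊕ᵢ (x_{n+1-i} ⊗ yᵢ)) if and only if for all 0 ≤ x₁ ≤ x₂ ≤ 1 and 0 ≤ y₁ ≤ y₂ ≤ 1, (x₁⊗y₁) ⊕ (x₂⊗y₂) ≥ (x₁⊗y₂) ⊕ (x₂⊗y₁). -/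
open Set

def IsUninorm (f : ℝ → ℝ → ℝ) : Prop :=
  (∀ x ∈ Icc (0:ℝ) 1, ∀ y ∈ Icc (0:ℝ) 1, f x y ∈ Icc (0:ℝ) 1) ∧
  (∀ x ∈ Icc (0:ℝ) 1, ∀ y ∈ Icc (0:ℝ) 1, f x y = f y x) ∧
  (∀ x ∈ Icc (0:ℝ) 1, ∀ y ∈ Icc (0:ℝ) 1, ∀ z ∈ Icc (0:ℝ) 1, f (f x y) z = f x (f y z)) ∧
  (∀ x ∈ Icc (0:ℝ) 1, ∀ y ∈ Icc (0:ℝ) 1, ∀ z ∈ Icc (0:ℝ) 1, x ≤ y → f x z ≤ f y z) ∧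
  (∃ e ∈ Icc (0:ℝ) 1, ∀ x ∈ Icc (0:ℝ) 1, f x e = x)

def iterOp (op : ℝ → ℝ → ℝ) : (n : ℕ) → (Fin (n+1) → ℝ) → ℝ
  | 0, v => v 0
  | n+1, v => op (iterOp op n (fun i => v i.castSucc)) (v (Fin.last (n+1)))

def RearrangementIneq (ot op : ℝ → ℝ → ℝ) : Prop :=
  ∀ n : ℕ, ∀ x y : Fin (n+1) → ℝ,
    Monotone x → Monotone y →
    (∀ i, x i ∈ Icc (0:ℝ) 1) → (∀ i, y i ∈ Icc (0:ℝ) 1) →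
    ∀ σ : Equiv.Perm (Fin (n+1)),
      iterOp op n (fun i => ot (x i.rev) (y i)) ≤
          iterOp op n (fun i => ot (x (σ i)) (y i)) ∧
        iterOp op n (fun i => ot (x (σ i)) (y i)) ≤
          iterOp op n (fun i => ot (x i) (y i))

def DualRearrangementIneq (ot op : ℝ → ℝ → ℝ) : Prop :=
  ∀ n : ℕ, ∀ x y : Fin (n+1) → ℝ,
    Monotone x → Monotone y →
    (∀ i, x i ∈ Icc (0:ℝ) 1) → (∀ i, y i ∈ Icc (0:ℝ) 1) →
    ∀ σ : Equiv.Perm (Fin (n+1)),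
      iterOp ot n (fun i => op (x i) (y i)) ≤
          iterOp ot n (fun i => op (x (σ i)) (y i)) ∧
        iterOp ot n (fun i => op (x (σ i)) (y i)) ≤
          iterOp ot n (fun i => op (x i.rev) (y i))

section AbstractRearrangement

set_option linter.unusedSectionVars false

variable {M : Type*} [CommMonoid M] [PartialOrder M]
  [CovariantClass M M (· * ·) (· ≤ ·)]
  [CovariantClass M M (Function.swap (· * ·)) (· ≤ ·)]

lemma aux_prod_two_swap {m : ℕ} (f g : Fin m → M) (i j : Fin m) (hij : i ≠ j)
    (hsame : ∀ k, k ≠ i → k ≠ j → f k = g k)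
    (hkey : f i * f j ≤ g i * g j) :
    ∏ k, f k ≤ ∏ k, g k := by
  have hj : j ∈ Finset.univ.erase i :=
    Finset.mem_erase.mpr ⟨hij.symm, Finset.mem_univ j⟩
  have h1 : ∏ k, f k = f i * (f j * ∏ k ∈ (Finset.univ.erase i).erase j, f k) := by
    rw [Finset.mul_prod_erase _ f hj, Finset.mul_prod_erase _ f (Finset.mem_univ i)]
  have h2 : ∏ k, g k = g i * (g j * ∏ k ∈ (Finset.univ.erase i).erase j, g k) := by
    rw [Finset.mul_prod_erase _ g hj, Finset.mul_prod_erase _ g (Finset.mem_univ i)]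
  have h3 : ∏ k ∈ (Finset.univ.erase i).erase j, f k
      = ∏ k ∈ (Finset.univ.erase i).erase j, g k := by
    refine Finset.prod_congr rfl fun k hk => ?_
    rw [Finset.mem_erase, Finset.mem_erase] at hk
    exact hsame k hk.2.1 hk.1
  rw [h1, h2, ← mul_assoc, ← mul_assoc, h3]
  exact mul_le_mul_left hkey _

lemma aux_castSucc_mono {n : ℕ} : Monotone (Fin.castSucc : Fin n → Fin (n+1)) :=
  fun _ _ h => by simpa [Fin.castSucc_le_castSucc_iff] using h

lemma aux_rearrangement_upper (F : M → M → M)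
    (h2 : ∀ a b c d : M, a ≤ b → c ≤ d → F a d * F b c ≤ F a c * F b d) :
    ∀ n : ℕ, ∀ x y : Fin n → M, Monotone x → Monotone y →
      ∀ σ : Equiv.Perm (Fin n),
        ∏ i, F (x (σ i)) (y i) ≤ ∏ i, F (x i) (y i) := by
  intro n
  induction n with
  | zero => intro x y _ _ σ; simp
  | succ n IH =>
    intro x y hx hy σ
    set σ' : Equiv.Perm (Fin (n+1)) :=
      σ * Equiv.swap (σ⁻¹ (Fin.last n)) (Fin.last n) with hσ'
    have hσ'last : σ' (Fin.last n) = Fin.last n := by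
      simp [hσ', Equiv.Perm.mul_apply, Equiv.swap_apply_right]
    have step1 : ∏ i, F (x (σ i)) (y i) ≤ ∏ i, F (x (σ' i)) (y i) := by
      by_cases h0 : σ⁻¹ (Fin.last n) = Fin.last n
      · have : σ' = σ := by rw [hσ', h0, Equiv.swap_self]; ext i; rfl
        rw [this]
      · refine aux_prod_two_swap _ _ (σ⁻¹ (Fin.last n)) (Fin.last n) h0 ?_ ?_
        · intro k hk1 hk2
          have hswap : Equiv.swap (σ⁻¹ (Fin.last n)) (Fin.last n) k = k :=
            Equiv.swap_apply_of_ne_of_ne hk1 hk2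
          simp only [hσ', Equiv.Perm.mul_apply, hswap]
        · have e1 : σ (σ⁻¹ (Fin.last n)) = Fin.last n := Equiv.apply_symm_apply σ _
          have e2 : σ' (σ⁻¹ (Fin.last n)) = σ (Fin.last n) := by
            simp [hσ', Equiv.Perm.mul_apply, Equiv.swap_apply_left]
          rw [e1, e2, hσ'last]
          calc F (x (Fin.last n)) (y (σ⁻¹ (Fin.last n)))
                * F (x (σ (Fin.last n))) (y (Fin.last n))
              = F (x (σ (Fin.last n))) (y (Fin.last n))
                * F (x (Fin.last n)) (y (σ⁻¹ (Fin.last n))) := mul_comm _ _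
            _ ≤ F (x (σ (Fin.last n))) (y (σ⁻¹ (Fin.last n)))
                * F (x (Fin.last n)) (y (Fin.last n)) :=
                h2 _ _ _ _ (hx (Fin.le_last _)) (hy (Fin.le_last _))
    refine step1.trans ?_
    have hne : ∀ i : Fin n, σ' i.castSucc ≠ Fin.last n := by
      intro i h
      have : i.castSucc = Fin.last n := σ'.injective (h.trans hσ'last.symm)
      exact (Fin.castSucc_lt_last i).ne this
    have tinj : Function.Injective
        (fun i : Fin n => (σ' i.castSucc).castPred (hne i)) := by
      intro a b hab
      have h1 : ((σ' a.castSucc).castPred (hne a)).castSucc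
          = ((σ' b.castSucc).castPred (hne b)).castSucc := congrArg Fin.castSucc hab
      rw [Fin.castSucc_castPred, Fin.castSucc_castPred] at h1
      exact Fin.castSucc_injective _ (σ'.injective h1)
    let τ : Equiv.Perm (Fin n) :=
      Equiv.ofBijective _ (Finite.injective_iff_bijective.mp tinj)
    have hτ : ∀ i, (τ i).castSucc = σ' i.castSucc := fun i =>
      Fin.castSucc_castPred _ (hne i)
    have hprod : (∏ i : Fin n, F (x (σ' i.castSucc)) (y i.castSucc))
        = ∏ i : Fin n, F (x ((τ i).castSucc)) (y i.castSucc) :=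
      Finset.prod_congr rfl fun i _ => by rw [hτ]
    calc ∏ i, F (x (σ' i)) (y i)
        = (∏ i : Fin n, F (x ((τ i).castSucc)) (y i.castSucc))
            * F (x (Fin.last n)) (y (Fin.last n)) := by
          rw [Fin.prod_univ_castSucc (f := fun i => F (x (σ' i)) (y i)), hprod, hσ'last]
      _ ≤ (∏ i : Fin n, F (x i.castSucc) (y i.castSucc))
            * F (x (Fin.last n)) (y (Fin.last n)) :=
          mul_le_mul_left
            (IH (fun i => x i.castSucc) (fun i => y i.castSucc)
              (hx.comp aux_castSucc_mono) (hy.comp aux_castSucc_mono) τ) _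
      _ = ∏ i, F (x i) (y i) :=
          (Fin.prod_univ_castSucc (f := fun i => F (x i) (y i))).symm

lemma aux_rearrangement_lower (F : M → M → M)
    (h2 : ∀ a b c d : M, a ≤ b → c ≤ d → F a d * F b c ≤ F a c * F b d) :
    ∀ n : ℕ, ∀ x y : Fin n → M, Antitone x → Monotone y →
      ∀ σ : Equiv.Perm (Fin n),
        ∏ i, F (x i) (y i) ≤ ∏ i, F (x (σ i)) (y i) := by
  intro n
  induction n with
  | zero => intro x y _ _ σ; simp
  | succ n IH =>
    intro x y hx hy σ
    set σ' : Equiv.Perm (Fin (n+1)) :=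
      σ * Equiv.swap (σ⁻¹ (Fin.last n)) (Fin.last n) with hσ'
    have hσ'last : σ' (Fin.last n) = Fin.last n := by
      simp [hσ', Equiv.Perm.mul_apply, Equiv.swap_apply_right]
    have step1 : ∏ i, F (x (σ' i)) (y i) ≤ ∏ i, F (x (σ i)) (y i) := by
      by_cases h0 : σ⁻¹ (Fin.last n) = Fin.last n
      · have : σ' = σ := by rw [hσ', h0, Equiv.swap_self]; ext i; rfl
        rw [this]
      · refine aux_prod_two_swap _ _ (σ⁻¹ (Fin.last n)) (Fin.last n) h0 ?_ ?_
        · intro k hk1 hk2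
          have hswap : Equiv.swap (σ⁻¹ (Fin.last n)) (Fin.last n) k = k :=
            Equiv.swap_apply_of_ne_of_ne hk1 hk2
          simp only [hσ', Equiv.Perm.mul_apply, hswap]
        · have e1 : σ (σ⁻¹ (Fin.last n)) = Fin.last n := Equiv.apply_symm_apply σ _
          have e2 : σ' (σ⁻¹ (Fin.last n)) = σ (Fin.last n) := by
            simp [hσ', Equiv.Perm.mul_apply, Equiv.swap_apply_left]
          rw [e1, e2, hσ'last]
          calc F (x (σ (Fin.last n))) (y (σ⁻¹ (Fin.last n)))
                * F (x (Fin.last n)) (y (Fin.last n))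
              = F (x (Fin.last n)) (y (Fin.last n))
                * F (x (σ (Fin.last n))) (y (σ⁻¹ (Fin.last n))) := mul_comm _ _
            _ ≤ F (x (Fin.last n)) (y (σ⁻¹ (Fin.last n)))
                * F (x (σ (Fin.last n))) (y (Fin.last n)) :=
                h2 _ _ _ _ (hx (Fin.le_last _)) (hy (Fin.le_last _))
    refine le_trans ?_ step1
    have hne : ∀ i : Fin n, σ' i.castSucc ≠ Fin.last n := by
      intro i h
      have : i.castSucc = Fin.last n := σ'.injective (h.trans hσ'last.symm)
      exact (Fin.castSucc_lt_last i).ne this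
    have tinj : Function.Injective
        (fun i : Fin n => (σ' i.castSucc).castPred (hne i)) := by
      intro a b hab
      have h1 : ((σ' a.castSucc).castPred (hne a)).castSucc
          = ((σ' b.castSucc).castPred (hne b)).castSucc := congrArg Fin.castSucc hab
      rw [Fin.castSucc_castPred, Fin.castSucc_castPred] at h1
      exact Fin.castSucc_injective _ (σ'.injective h1)
    let τ : Equiv.Perm (Fin n) :=
      Equiv.ofBijective _ (Finite.injective_iff_bijective.mp tinj)
    have hτ : ∀ i, (τ i).castSucc = σ' i.castSucc := fun i =>
      Fin.castSucc_castPred _ (hne i)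
    have hprod : (∏ i : Fin n, F (x (σ' i.castSucc)) (y i.castSucc))
        = ∏ i : Fin n, F (x ((τ i).castSucc)) (y i.castSucc) :=
      Finset.prod_congr rfl fun i _ => by rw [hτ]
    calc ∏ i, F (x i) (y i)
        = (∏ i : Fin n, F (x i.castSucc) (y i.castSucc))
            * F (x (Fin.last n)) (y (Fin.last n)) :=
          Fin.prod_univ_castSucc (f := fun i => F (x i) (y i))
      _ ≤ (∏ i : Fin n, F (x ((τ i).castSucc)) (y i.castSucc))
            * F (x (Fin.last n)) (y (Fin.last n)) :=
          mul_le_mul_left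
            (IH (fun i => x i.castSucc) (fun i => y i.castSucc)
              (hx.comp_monotone aux_castSucc_mono) (hy.comp aux_castSucc_mono) τ) _
      _ = ∏ i, F (x (σ' i)) (y i) := by
          rw [Fin.prod_univ_castSucc (f := fun i => F (x (σ' i)) (y i)), hprod, hσ'last]

lemma aux_iterOp_eq_prod (op : ℝ → ℝ → ℝ) {N : Type*} [CommMonoid N] (ι : N → ℝ)
    (hι : ∀ a b : N, ι (a * b) = op (ι a) (ι b)) :
    ∀ n : ℕ, ∀ V : Fin (n+1) → N,
      iterOp op n (fun i => ι (V i)) = ι (∏ i, V i) := by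
  intro n
  induction n with
  | zero => intro V; simp [iterOp]
  | succ n IH =>
    intro V
    show op (iterOp op n (fun i => ι (V i.castSucc))) (ι (V (Fin.last (n+1))))
        = ι (∏ i, V i)
    rw [IH (fun i => V i.castSucc), ← hι]
    exact congrArg ι (Fin.prod_univ_castSucc V).symm

end AbstractRearrangement

/-- An opaque carrier for the unit interval, so that no pre-existing algebraic
instances from Mathlib interfere. -/
structure UI : Type where
  val : ℝ
  property : val ∈ Icc (0:ℝ) 1

lemma UI.ext' {a b : UI} (h : a.val = b.val) : a = b := by
  cases a; cases b; simpa using h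

lemma aux_monotone_pair {a b : ℝ} (h : a ≤ b) : Monotone ![a, b] := by
  intro i j hij
  fin_cases i <;> fin_cases j
  · exact le_refl _
  · simpa using h
  · exact absurd hij (by decide)
  · exact le_refl _

lemma aux_iterOp_one (op : ℝ → ℝ → ℝ) (v : Fin 2 → ℝ) :
    iterOp op 1 v = op (v 0) (v 1) := rfl

theorem rearrangement_iff_two_by_two (ot op : ℝ → ℝ → ℝ)
    (hot : IsUninorm ot) (hop : IsUninorm op) :
    RearrangementIneq ot op ↔
      ∀ x₁ ∈ Icc (0:ℝ) 1, ∀ x₂ ∈ Icc (0:ℝ) 1, ∀ y₁ ∈ Icc (0:ℝ) 1, ∀ y₂ ∈ Icc (0:ℝ) 1,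
        x₁ ≤ x₂ → y₁ ≤ y₂ →
          op (ot x₁ y₂) (ot x₂ y₁) ≤ op (ot x₁ y₁) (ot x₂ y₂) := by
  obtain ⟨otcl, otcomm, -, -, -⟩ := hot
  obtain ⟨opcl, opcomm, opassoc, opmono, e, he, hide⟩ := hop
  constructor
  · -- forward direction: instantiate with n = 1
    intro hR x₁ hx₁ x₂ hx₂ y₁ hy₁ y₂ hy₂ hx12 hy12
    have hxi : ∀ i, (![x₁, x₂] : Fin 2 → ℝ) i ∈ Icc (0:ℝ) 1 := by
      intro i
      fin_cases i
      · simpa using hx₁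
      · simpa using hx₂
    have hyi : ∀ i, (![y₁, y₂] : Fin 2 → ℝ) i ∈ Icc (0:ℝ) 1 := by
      intro i
      fin_cases i
      · simpa using hy₁
      · simpa using hy₂
    have key := (hR 1 ![x₁, x₂] ![y₁, y₂] (aux_monotone_pair hx12)
      (aux_monotone_pair hy12) hxi hyi (Equiv.swap 0 1)).2
    rw [aux_iterOp_one, aux_iterOp_one] at key
    simp only [Equiv.swap_apply_left, Equiv.swap_apply_right,
      Matrix.cons_val_zero, Matrix.cons_val_one, Matrix.head_cons] at key
    calc op (ot x₁ y₂) (ot x₂ y₁)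
        = op (ot x₂ y₁) (ot x₁ y₂) :=
          opcomm _ (otcl _ hx₁ _ hy₂) _ (otcl _ hx₂ _ hy₁)
      _ ≤ op (ot x₁ y₁) (ot x₂ y₂) := key
  · -- backward direction
    intro h22
    intro n x y hx hy hxi hyi σ
    letI : PartialOrder UI :=
      { le := fun a b => a.val ≤ b.val
        le_refl := fun a => le_refl a.val
        le_trans := fun a b c h1 h2 => by
          show a.val ≤ c.val
          exact le_trans (show a.val ≤ b.val from h1) (show b.val ≤ c.val from h2)
        le_antisymm := fun a b h1 h2 =>
          UI.ext' (le_antisymm (show a.val ≤ b.val from h1) (show b.val ≤ a.val from h2)) }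
    letI : CommMonoid UI :=
      { mul := fun a b => ⟨op a.val b.val, opcl _ a.property _ b.property⟩
        one := ⟨e, he⟩
        mul_assoc := fun a b c =>
          UI.ext' (opassoc _ a.property _ b.property _ c.property)
        one_mul := fun a => UI.ext' (by
          show op e a.val = a.val
          rw [opcomm e he a.val a.property]
          exact hide a.val a.property)
        mul_one := fun a => UI.ext' (hide a.val a.property)
        mul_comm := fun a b => UI.ext' (opcomm _ a.property _ b.property) }
    haveI cov1 : CovariantClass UI UI (· * ·) (· ≤ ·) := by
      constructor
      intro c a b hab
      show op c.val a.val ≤ op c.val b.val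
      rw [opcomm c.val c.property a.val a.property,
        opcomm c.val c.property b.val b.property]
      exact opmono a.val a.property b.val b.property c.val c.property hab
    haveI cov2 : CovariantClass UI UI (Function.swap (· * ·)) (· ≤ ·) := by
      constructor
      intro c a b hab
      show op a.val c.val ≤ op b.val c.val
      exact opmono a.val a.property b.val b.property c.val c.property hab
    set F : UI → UI → UI :=
      fun a b => ⟨ot a.val b.val, otcl _ a.property _ b.property⟩ with hF
    have hF2 : ∀ a b c d : UI, a ≤ b → c ≤ d →
        F a d * F b c ≤ F a c * F b d := by
      intro a b c d hab hcd
      show op (ot a.val d.val) (ot b.val c.val)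
          ≤ op (ot a.val c.val) (ot b.val d.val)
      exact h22 a.val a.property b.val b.property c.val c.property d.val d.property
        hab hcd
    set X : Fin (n+1) → UI := fun i => ⟨x i, hxi i⟩ with hX
    set Y : Fin (n+1) → UI := fun i => ⟨y i, hyi i⟩ with hY
    have hXm : Monotone X := fun i j hij => show x i ≤ x j from hx hij
    have hYm : Monotone Y := fun i j hij => show y i ≤ y j from hy hij
    have hι : ∀ a b : UI, (a * b).val = op a.val b.val := fun a b => rfl
    constructor
    · -- lower bound
      have hX' : Antitone (fun i : Fin (n+1) => X i.rev) := by
        intro i j hij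
        exact hXm (Fin.rev_le_rev.mpr hij)
      have hB := aux_rearrangement_lower F hF2 (n+1) (fun i : Fin (n+1) => X i.rev) Y
        hX' hYm (σ.trans Fin.revPerm)
      have e1 : iterOp op n (fun i => ot (x i.rev) (y i))
          = (∏ i, F (X i.rev) (Y i)).val :=
        aux_iterOp_eq_prod op UI.val hι n (fun i => F (X i.rev) (Y i))
      have e2 : iterOp op n (fun i => ot (x (σ i)) (y i))
          = (∏ i, F (X ((σ.trans Fin.revPerm) i).rev) (Y i)).val := by
        have heq : (fun i => ot (x (σ i)) (y i))
            = fun i : Fin (n+1) => (F (X ((σ.trans Fin.revPerm) i).rev) (Y i)).val := by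
          funext i
          show ot (x (σ i)) (y i) = ot (x ((σ i).rev.rev)) (y i)
          rw [Fin.rev_rev]
        rw [heq]
        exact aux_iterOp_eq_prod op UI.val hι n _
      rw [e1, e2]
      exact hB
    · -- upper bound
      have hA := aux_rearrangement_upper F hF2 (n+1) X Y hXm hYm σ
      have e1 : iterOp op n (fun i => ot (x (σ i)) (y i))
          = (∏ i, F (X (σ i)) (Y i)).val :=
        aux_iterOp_eq_prod op UI.val hι n (fun i => F (X (σ i)) (Y i))
      have e2 : iterOp op n (fun i => ot (x i) (y i))
          = (∏ i, F (X i) (Y i)).val :=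
        aux_iterOp_eq_prod op UI.val hι n (fun i => F (X i) (Y i))
      rw [e1, e2]
      exact hA
end

section
/- Let ⊗ and ⊕ be uninorms on [0,1] and ¬ a strong negation (a strictly decreasing involutive function on [0,1] with ¬0=1, ¬1=0). Define the duals ⊗̃ = Φ^¬(⊕) and ⊕̃ = Φ^¬(⊗) by Φ^¬(f)(x,y) = ¬f(¬x,¬y). Then (⊗, ⊕) satisfies the rearrangement inequality if and only if (Φ^¬(⊕), Φ^¬(⊗)) satisfies the dual rearrangement inequality. -/
open Set

def IsStrongNegation (neg : ℝ → ℝ) : Prop :=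
  (∀ x ∈ Icc (0:ℝ) 1, neg x ∈ Icc (0:ℝ) 1) ∧
  StrictAntiOn neg (Icc (0:ℝ) 1) ∧
  neg 0 = 1 ∧ neg 1 = 0 ∧
  (∀ x ∈ Icc (0:ℝ) 1, neg (neg x) = x)

def dualOp (neg : ℝ → ℝ) (f : ℝ → ℝ → ℝ) : ℝ → ℝ → ℝ :=
  fun x y => neg (f (neg x) (neg y))

namespace RearrAux

lemma iterOp_mem (f : ℝ → ℝ → ℝ)
    (hf : ∀ x ∈ Icc (0:ℝ) 1, ∀ y ∈ Icc (0:ℝ) 1, f x y ∈ Icc (0:ℝ) 1) :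
    ∀ (n : ℕ) (v : Fin (n+1) → ℝ), (∀ i, v i ∈ Icc (0:ℝ) 1) → iterOp f n v ∈ Icc (0:ℝ) 1
  | 0, v, hv => hv 0
  | n+1, v, hv => hf _ (iterOp_mem f hf n _ (fun i => hv _)) _ (hv _)

/-- Type synonym to avoid the pre-existing algebraic instances on `unitInterval`. -/
def UI : Type := ↥(Icc (0:ℝ) 1)

def UI.val (a : UI) : ℝ := Subtype.val a

def UI.mk (x : ℝ) (h : x ∈ Icc (0:ℝ) 1) : UI := ⟨x, h⟩

lemma UI.prop (a : UI) : a.val ∈ Icc (0:ℝ) 1 := Subtype.prop a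

/-- The commutative monoid structure on `Icc 0 1` induced by a uninorm. -/
noncomputable def uCM (f : ℝ → ℝ → ℝ) (hf : IsUninorm f) : CommMonoid UI where
  mul a b := UI.mk (f a.val b.val) (hf.1 _ a.prop _ b.prop)
  one := UI.mk hf.2.2.2.2.choose hf.2.2.2.2.choose_spec.1
  mul_assoc a b c := Subtype.ext (hf.2.2.1 _ a.prop _ b.prop _ c.prop)
  mul_comm a b := Subtype.ext (hf.2.1 _ a.prop _ b.prop)
  mul_one a := Subtype.ext (hf.2.2.2.2.choose_spec.2 _ a.prop)
  one_mul a := by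
    refine Subtype.ext ?_
    show f hf.2.2.2.2.choose a.val = a.val
    rw [hf.2.1 _ hf.2.2.2.2.choose_spec.1 _ a.prop]
    exact hf.2.2.2.2.choose_spec.2 _ a.prop

lemma iterOp_eq_prod (f : ℝ → ℝ → ℝ) (hf : IsUninorm f) :
    ∀ (n : ℕ) (v : Fin (n+1) → UI),
      iterOp f n (fun i => (v i).val) =
        (@Finset.prod (Fin (n+1)) UI (uCM f hf) Finset.univ v : UI).val := by
  letI := uCM f hf
  intro n
  induction n with
  | zero =>
    intro v
    rw [show (Finset.univ.prod v : UI) = v 0 from Fin.prod_univ_one v]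
    rfl
  | succ n ih =>
    intro v
    rw [show (Finset.univ.prod v : UI) =
        (Finset.univ.prod (fun i : Fin (n+1) => v i.castSucc)) * v (Fin.last (n+1)) from
      Fin.prod_univ_castSucc v]
    show f (iterOp f n (fun i => (v i.castSucc).val)) ((v (Fin.last (n+1))).val) = _
    rw [ih (fun i => v i.castSucc)]
    rfl

lemma iterOp_perm (f : ℝ → ℝ → ℝ) (hf : IsUninorm f) (n : ℕ) (v : Fin (n+1) → ℝ)
    (hv : ∀ i, v i ∈ Icc (0:ℝ) 1) (e : Equiv.Perm (Fin (n+1))) :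
    iterOp f n (fun i => v (e i)) = iterOp f n v := by
  letI := uCM f hf
  calc iterOp f n (fun i => v (e i))
      = (∏ i, (fun j => UI.mk (v j) (hv j)) (e i) : UI).val :=
        iterOp_eq_prod f hf n (fun i => UI.mk (v (e i)) (hv (e i)))
    _ = (∏ j, UI.mk (v j) (hv j) : UI).val := by
        rw [Equiv.prod_comp e (fun j => UI.mk (v j) (hv j))]
    _ = iterOp f n v := (iterOp_eq_prod f hf n (fun j => UI.mk (v j) (hv j))).symm

lemma iterOp_dual (f : ℝ → ℝ → ℝ) (neg : ℝ → ℝ)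
    (hf : ∀ x ∈ Icc (0:ℝ) 1, ∀ y ∈ Icc (0:ℝ) 1, f x y ∈ Icc (0:ℝ) 1)
    (hneg : IsStrongNegation neg) :
    ∀ (n : ℕ) (v : Fin (n+1) → ℝ), (∀ i, v i ∈ Icc (0:ℝ) 1) →
      iterOp (dualOp neg f) n (fun i => neg (v i)) = neg (iterOp f n v)
  | 0, v, hv => rfl
  | n+1, v, hv => by
    show dualOp neg f (iterOp (dualOp neg f) n fun i => neg (v i.castSucc))
        (neg (v (Fin.last (n+1)))) = _
    rw [iterOp_dual f neg hf hneg n _ (fun i => hv _)]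
    show neg (f (neg (neg _)) (neg (neg _))) = _
    rw [hneg.2.2.2.2 _ (iterOp_mem f hf n _ fun i => hv _), hneg.2.2.2.2 _ (hv _)]
    rfl

lemma neg_le_neg {neg : ℝ → ℝ} (hneg : IsStrongNegation neg) {a b : ℝ}
    (ha : a ∈ Icc (0:ℝ) 1) (hb : b ∈ Icc (0:ℝ) 1) (h : a ≤ b) : neg b ≤ neg a := by
  rcases h.lt_or_eq with h | h
  · exact (hneg.2.1 ha hb h).le
  · rw [h]

lemma le_of_neg_le_neg {neg : ℝ → ℝ} (hneg : IsStrongNegation neg) {a b : ℝ}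
    (ha : a ∈ Icc (0:ℝ) 1) (hb : b ∈ Icc (0:ℝ) 1) (h : neg a ≤ neg b) : b ≤ a := by
  by_contra hc
  push_neg at hc
  exact absurd (hneg.2.1 ha hb hc) (not_lt.2 h)

lemma negrev_mono {neg : ℝ → ℝ} (hneg : IsStrongNegation neg) {n : ℕ} {x : Fin (n+1) → ℝ}
    (hxm : Monotone x) (hx : ∀ i, x i ∈ Icc (0:ℝ) 1) :
    Monotone (fun i : Fin (n+1) => neg (x i.rev)) :=
  fun i j hij => neg_le_neg hneg (hx _) (hx _) (hxm (Fin.rev_le_rev.mpr hij))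

/-- Key computation: the iterated dual op of dual terms equals the negation of the
iterated op of terms, with all indices reversed. -/
lemma key (ot op : ℝ → ℝ → ℝ) (neg : ℝ → ℝ) (hot : IsUninorm ot) (hop : IsUninorm op)
    (hneg : IsStrongNegation neg) (n : ℕ) (x y : Fin (n+1) → ℝ)
    (hx : ∀ i, x i ∈ Icc (0:ℝ) 1) (hy : ∀ i, y i ∈ Icc (0:ℝ) 1) (π : Equiv.Perm (Fin (n+1))) :
    iterOp (dualOp neg op) n (fun i => dualOp neg ot (x (π i)) (y i)) =
      neg (iterOp op n (fun j => ot (neg (x (π j.rev))) (neg (y j.rev)))) := by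
  have hmem : ∀ i, ot (neg (x (π i))) (neg (y i)) ∈ Icc (0:ℝ) 1 :=
    fun i => hot.1 _ (hneg.1 _ (hx _)) _ (hneg.1 _ (hy _))
  have h1 : (fun i => dualOp neg ot (x (π i)) (y i)) =
      fun i => neg (ot (neg (x (π i))) (neg (y i))) := rfl
  rw [h1, iterOp_dual op neg hop.1 hneg n _ hmem]
  congr 1
  exact (iterOp_perm op hop n _ hmem Fin.revPerm).symm

end RearrAux

open RearrAux in
theorem rearrangement_iff_dual_rearrangement (ot op : ℝ → ℝ → ℝ) (neg : ℝ → ℝ)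
    (hot : IsUninorm ot) (hop : IsUninorm op) (hneg : IsStrongNegation neg) :
    RearrangementIneq ot op ↔
      DualRearrangementIneq (dualOp neg op) (dualOp neg ot) := by
  constructor
  · intro h n x y hxm hym hx hy σ
    have hXmem : ∀ i : Fin (n+1), neg (x i.rev) ∈ Icc (0:ℝ) 1 := fun i => hneg.1 _ (hx _)
    have hYmem : ∀ i : Fin (n+1), neg (y i.rev) ∈ Icc (0:ℝ) 1 := fun i => hneg.1 _ (hy _)
    have hmain := h n (fun i => neg (x i.rev)) (fun i => neg (y i.rev))
      (negrev_mono hneg hxm hx) (negrev_mono hneg hym hy) hXmem hYmem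
      (Fin.revPerm.trans (σ.trans Fin.revPerm))
    have e1 := key ot op neg hot hop hneg n x y hx hy (Equiv.refl _)
    have e2 := key ot op neg hot hop hneg n x y hx hy σ
    have e3 := key ot op neg hot hop hneg n x y hx hy Fin.revPerm
    simp only [Equiv.refl_apply, Equiv.trans_apply, Fin.revPerm_apply, Fin.rev_rev]
      at e1 e2 e3 hmain
    have m1 : iterOp op n (fun i => ot (neg (x (σ i.rev))) (neg (y i.rev))) ∈ Icc (0:ℝ) 1 :=
      iterOp_mem op hop.1 n _ (fun i => hot.1 _ (hneg.1 _ (hx _)) _ (hneg.1 _ (hy _)))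
    have m2 : iterOp op n (fun i => ot (neg (x i.rev)) (neg (y i.rev))) ∈ Icc (0:ℝ) 1 :=
      iterOp_mem op hop.1 n _ (fun i => hot.1 _ (hneg.1 _ (hx _)) _ (hneg.1 _ (hy _)))
    have m3 : iterOp op n (fun i => ot (neg (x i)) (neg (y i.rev))) ∈ Icc (0:ℝ) 1 :=
      iterOp_mem op hop.1 n _ (fun i => hot.1 _ (hneg.1 _ (hx _)) _ (hneg.1 _ (hy _)))
    refine ⟨?_, ?_⟩
    · rw [e1, e2]
      exact RearrAux.neg_le_neg hneg m1 m2 hmain.2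
    · rw [e2, e3]
      exact RearrAux.neg_le_neg hneg m3 m1 hmain.1
  · intro h n x y hxm hym hx hy σ
    have hXmem : ∀ i : Fin (n+1), neg (x i.rev) ∈ Icc (0:ℝ) 1 := fun i => hneg.1 _ (hx _)
    have hYmem : ∀ i : Fin (n+1), neg (y i.rev) ∈ Icc (0:ℝ) 1 := fun i => hneg.1 _ (hy _)
    have inv_x : ∀ a, neg (neg (x a)) = x a := fun a => hneg.2.2.2.2 _ (hx a)
    have inv_y : ∀ a, neg (neg (y a)) = y a := fun a => hneg.2.2.2.2 _ (hy a)
    have hmain := h n (fun i => neg (x i.rev)) (fun i => neg (y i.rev))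
      (negrev_mono hneg hxm hx) (negrev_mono hneg hym hy) hXmem hYmem
      (Fin.revPerm.trans (σ.trans Fin.revPerm))
    have e1 := key ot op neg hot hop hneg n (fun i => neg (x i.rev)) (fun i => neg (y i.rev))
      hXmem hYmem (Equiv.refl _)
    have e2 := key ot op neg hot hop hneg n (fun i => neg (x i.rev)) (fun i => neg (y i.rev))
      hXmem hYmem (Fin.revPerm.trans (σ.trans Fin.revPerm))
    have e3 := key ot op neg hot hop hneg n (fun i => neg (x i.rev)) (fun i => neg (y i.rev))
      hXmem hYmem Fin.revPerm
    simp only [Equiv.refl_apply, Equiv.trans_apply, Fin.revPerm_apply, Fin.rev_rev,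
      inv_x, inv_y] at e1 e2 e3 hmain
    rw [e1, e2, e3] at hmain
    have m1 : iterOp op n (fun i => ot (x (σ i)) (y i)) ∈ Icc (0:ℝ) 1 :=
      iterOp_mem op hop.1 n _ (fun i => hot.1 _ (hx _) _ (hy _))
    have m2 : iterOp op n (fun i => ot (x i) (y i)) ∈ Icc (0:ℝ) 1 :=
      iterOp_mem op hop.1 n _ (fun i => hot.1 _ (hx _) _ (hy _))
    have m3 : iterOp op n (fun i => ot (x i.rev) (y i)) ∈ Icc (0:ℝ) 1 :=
      iterOp_mem op hop.1 n _ (fun i => hot.1 _ (hx _) _ (hy _))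
    exact ⟨le_of_neg_le_neg hneg m1 m3 hmain.2, le_of_neg_le_neg hneg m2 m1 hmain.1⟩
end

section
/- If f is a T-norm with an additive generator μ such that for all 0 ≤ x ≤ y ≤ 1 and all h ≥ 0 with y + h ≤ 1, μ(x) − μ(x+h) ≥ μ(y) − μ(y+h), then f satisfies property A. -/
open Set ENNReal

def IsTnorm (f : ℝ → ℝ → ℝ) : Prop :=
  (∀ x ∈ Icc (0:ℝ) 1, ∀ y ∈ Icc (0:ℝ) 1, f x y ∈ Icc (0:ℝ) 1) ∧
  (∀ x ∈ Icc (0:ℝ) 1, ∀ y ∈ Icc (0:ℝ) 1, f x y = f y x) ∧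
  (∀ x ∈ Icc (0:ℝ) 1, ∀ y ∈ Icc (0:ℝ) 1, ∀ z ∈ Icc (0:ℝ) 1, f (f x y) z = f x (f y z)) ∧
  (∀ x ∈ Icc (0:ℝ) 1, ∀ y ∈ Icc (0:ℝ) 1, ∀ z ∈ Icc (0:ℝ) 1, x ≤ y → f x z ≤ f y z) ∧
  (∀ x ∈ Icc (0:ℝ) 1, f x 1 = x)

def PropA (f : ℝ → ℝ → ℝ) : Prop :=
  ∀ x y z w : ℝ, 0 ≤ x → x ≤ y → y ≤ z → z ≤ w → w ≤ 1 →
    w + x ≤ y + z → f x w ≤ f y z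

def PropB (f : ℝ → ℝ → ℝ) : Prop :=
  ∀ x y z w : ℝ, 0 ≤ x → x ≤ y → y ≤ 1 → 0 ≤ z → z ≤ w → w ≤ 1 →
    f x w - f x z ≤ f y w - f y z

/-- `μ` is an additive generator of the T-norm `f`, with pseudo-inverse `μinv`. -/
def IsAdditiveGenerator (f : ℝ → ℝ → ℝ) (μ : ℝ → ℝ≥0∞) (μinv : ℝ≥0∞ → ℝ) : Prop :=
  StrictAntiOn μ (Icc (0:ℝ) 1) ∧
  ContinuousWithinAt μ (Icc (0:ℝ) 1) 0 ∧
  μ 1 = 0 ∧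
  Antitone μinv ∧
  (∀ x ∈ Icc (0:ℝ) 1, μinv (μ x) = x) ∧
  (∀ x ∈ Icc (0:ℝ) 1, ∀ y ∈ Icc (0:ℝ) 1,
    (μ x + μ y ∈ μ '' (Icc (0:ℝ) 1) ∪ Ici (μ 0)) ∧ f x y = μinv (μ x + μ y))

theorem propA_of_generator_decreasing_differences (f : ℝ → ℝ → ℝ)
    (μ : ℝ → ℝ≥0∞) (μinv : ℝ≥0∞ → ℝ)
    (hf : IsTnorm f) (hgen : IsAdditiveGenerator f μ μinv)
    (hdiff : ∀ x y h : ℝ, 0 ≤ x → x ≤ y → y ≤ 1 → 0 ≤ h → y + h ≤ 1 →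
      μ y - μ (y + h) ≤ μ x - μ (x + h)) :
    PropA f := by
  obtain ⟨hmono, hcont, hμ1, hinv_anti, hinv, hgen2⟩ := hgen
  intro x y z w hx hxy hyz hzw hw1 hsum
  have hxI : x ∈ Icc (0:ℝ) 1 := ⟨hx, by linarith⟩
  have hyI : y ∈ Icc (0:ℝ) 1 := ⟨by linarith, by linarith⟩
  have hzI : z ∈ Icc (0:ℝ) 1 := ⟨by linarith, by linarith⟩
  have hwI : w ∈ Icc (0:ℝ) 1 := ⟨by linarith, hw1⟩
  have hanti := hmono.antitoneOn
  have h1 : μ z - μ w ≤ μ x - μ (x + (w - z)) := by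
    have := hdiff x z (w - z) hx (by linarith) (by linarith) (by linarith) (by linarith)
    simpa using this
  have hxh : x + (w - z) ∈ Icc (0:ℝ) 1 := ⟨by linarith, by linarith⟩
  have h2 : μ y ≤ μ (x + (w - z)) := hanti hxh hyI (by linarith)
  have h3 : μ z - μ w ≤ μ x - μ y := h1.trans (tsub_le_tsub_left h2 _)
  have hwz : μ w ≤ μ z := hanti hzI hwI hzw
  have hyx : μ y ≤ μ x := hanti hxI hyI hxy
  have key : μ y + μ z ≤ μ x + μ w := by
    calc μ y + μ z = μ y + (μ z - μ w + μ w) := by rw [tsub_add_cancel_of_le hwz]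
    _ ≤ μ y + (μ x - μ y + μ w) := by gcongr
    _ = (μ y + (μ x - μ y)) + μ w := by ring
    _ = μ x + μ w := by rw [add_tsub_cancel_of_le hyx]
  rw [(hgen2 x hxI w hwI).2, (hgen2 y hyI z hzI).2]
  exact hinv_anti key
end

section
/- If f is a T-norm with a convex (equivalently, with the stated decreasing-difference condition) additive generator μ, i.e., f is an Archimedean copula, then f satisfies both property A and property B. -/
open Set ENNReal

/-- An Archimedean copula, i.e. a T-norm with a convex additive generator (equivalently,
a generator satisfying the decreasing-difference condition), satisfies properties A and B. -/
theorem propA_and_propB_of_convex_generator (f : ℝ → ℝ → ℝ)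
    (μ : ℝ → ℝ≥0∞) (μinv : ℝ≥0∞ → ℝ)
    (hf : IsTnorm f) (hgen : IsAdditiveGenerator f μ μinv)
    (hconvex : ∀ x y h : ℝ, 0 ≤ x → x ≤ y → y ≤ 1 → 0 ≤ h → y + h ≤ 1 →
      μ y - μ (y + h) ≤ μ x - μ (x + h)) :
    PropA f ∧ PropB f := by
  obtain ⟨hrange, hcomm, _hassoc, hmono, _hone⟩ := hf
  obtain ⟨hμanti, _hcont, _hμ1, hinv_anti, hinv_μ, hgen'⟩ := hgen
  have hμmono : ∀ a ∈ Icc (0:ℝ) 1, ∀ b ∈ Icc (0:ℝ) 1, a ≤ b → μ b ≤ μ a := by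
    intro a ha b hb hab
    rcases eq_or_lt_of_le hab with h | h
    · rw [h]
    · exact (hμanti ha hb h).le
  have key : ∀ u ∈ Icc (0:ℝ) 1, ∀ v ∈ Icc (0:ℝ) 1,
      μ (f u v) ≤ μ u + μ v ∧ (μ u + μ v < μ 0 → μ (f u v) = μ u + μ v) := by
    intro u hu v hv
    obtain ⟨hmem, hfe⟩ := hgen' u hu v hv
    rcases hmem with ⟨t, ht, hμt⟩ | hge
    · rw [hfe, ← hμt, hinv_μ t ht, hμt]
      exact ⟨le_rfl, fun _ => rfl⟩
    · have h0 : f u v = 0 := by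
        have h1 : f u v ≤ 0 := by
          rw [hfe]
          calc μinv (μ u + μ v) ≤ μinv (μ 0) := hinv_anti hge
            _ = 0 := hinv_μ 0 ⟨le_rfl, zero_le_one⟩
        exact le_antisymm h1 (hrange u hu v hv).1
      rw [h0]
      exact ⟨hge, fun hlt => absurd hge (not_le.mpr hlt)⟩
  have fzero : ∀ u ∈ Icc (0:ℝ) 1, ∀ v ∈ Icc (0:ℝ) 1, μ 0 ≤ μ u + μ v → f u v = 0 := by
    intro u hu v hv hge
    have h1 : f u v ≤ 0 := by
      rw [(hgen' u hu v hv).2]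
      calc μinv (μ u + μ v) ≤ μinv (μ 0) := hinv_anti hge
        _ = 0 := hinv_μ 0 ⟨le_rfl, zero_le_one⟩
    exact le_antisymm h1 (hrange u hu v hv).1
  constructor
  · -- Property A
    intro x y z w hx0 hxy hyz hzw hw1 hsum
    have hx : x ∈ Icc (0:ℝ) 1 := ⟨hx0, by linarith⟩
    have hy : y ∈ Icc (0:ℝ) 1 := ⟨by linarith, by linarith⟩
    have hz : z ∈ Icc (0:ℝ) 1 := ⟨by linarith, by linarith⟩
    have hw : w ∈ Icc (0:ℝ) 1 := ⟨by linarith, by linarith⟩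
    have h1 : μ z - μ (z + (w - z)) ≤ μ x - μ (x + (w - z)) :=
      hconvex x z (w - z) hx0 (by linarith) (by linarith) (by linarith) (by linarith)
    rw [show z + (w - z) = w by ring] at h1
    have h2 : μ y ≤ μ (x + (w - z)) :=
      hμmono (x + (w - z)) ⟨by linarith, by linarith⟩ y hy (by linarith)
    have h3 : μ z - μ w ≤ μ x - μ y := h1.trans (tsub_le_tsub_left h2 (μ x))
    have h4 : μ y + μ z ≤ μ x + μ w := by
      calc μ y + μ z ≤ μ y + ((μ z - μ w) + μ w) := add_le_add_right le_tsub_add _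
        _ ≤ μ y + ((μ x - μ y) + μ w) := add_le_add_right (add_le_add_left h3 _) _
        _ = (μ y + (μ x - μ y)) + μ w := by rw [add_assoc]
        _ = μ x + μ w := by rw [add_tsub_cancel_of_le (hμmono x hx y hy hxy)]
    rw [(hgen' x hx w hw).2, (hgen' y hy z hz).2]
    exact hinv_anti h4
  · -- Property B
    intro x y z w hx0 hxy hy1 hz0 hzw hw1
    have hx : x ∈ Icc (0:ℝ) 1 := ⟨hx0, by linarith⟩
    have hy : y ∈ Icc (0:ℝ) 1 := ⟨by linarith, hy1⟩
    have hz : z ∈ Icc (0:ℝ) 1 := ⟨hz0, by linarith⟩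
    have hw : w ∈ Icc (0:ℝ) 1 := ⟨by linarith, hw1⟩
    have hBA : μ y ≤ μ x := hμmono x hx y hy hxy
    have hDC : μ w ≤ μ z := hμmono z hz w hw hzw
    by_cases hcase : μ y + μ z < μ 0
    · -- the generator sums stay below μ 0, so f-values are given exactly
      have hBCne : μ y + μ z ≠ ∞ := by
        rcases eq_or_ne (μ 0) ∞ with h0 | h0
        · exact (hcase.trans_le h0.le).ne
        · exact (hcase.trans h0.lt_top).ne
      have hCne : μ z ≠ ∞ := ne_top_of_le_ne_top hBCne le_add_self
      have hBDne : μ y + μ w ≠ ∞ :=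
        ne_top_of_le_ne_top hBCne (add_le_add_right hDC _)
      have hBDlt : μ y + μ w < μ 0 := lt_of_le_of_lt (add_le_add_right hDC _) hcase
      have hμq : μ (f y z) = μ y + μ z := (key y hy z hz).2 hcase
      have hμp : μ (f y w) = μ y + μ w := (key y hy w hw).2 hBDlt
      have hsmem := hrange x hx z hz
      have hqmem := hrange y hy z hz
      have hpmem := hrange y hy w hw
      have hsq : f x z ≤ f y z := hmono x hx y hy z hz hxy
      have hqp : f y z ≤ f y w := by
        rw [hcomm y hy z hz, hcomm y hy w hw]
        exact hmono z hz w hw y hy hzw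
      have hconv : μ (f y z) - μ (f y z + (f y w - f y z)) ≤
          μ (f x z) - μ (f x z + (f y w - f y z)) :=
        hconvex (f x z) (f y z) (f y w - f y z) hsmem.1 hsq hqmem.2
          (by linarith) (by linarith [hpmem.2])
      rw [show f y z + (f y w - f y z) = f y w by ring] at hconv
      have e1 : μ (f y z) - μ (f y w) = μ z - μ w := by
        rw [hμq, hμp]
        have e2 : μ y + μ z = (μ y + μ w) + (μ z - μ w) := by
          rw [add_assoc, add_tsub_cancel_of_le hDC]
        rw [e2, ENNReal.add_sub_cancel_left hBDne]
      rw [e1] at hconv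
      have hshmem : f x z + (f y w - f y z) ∈ Icc (0:ℝ) 1 :=
        ⟨by linarith [hsmem.1], by linarith [hpmem.2]⟩
      have h3 : μ (f x z + (f y w - f y z)) + (μ z - μ w) ≤ μ (f x z) := by
        calc μ (f x z + (f y w - f y z)) + (μ z - μ w)
            ≤ μ (f x z + (f y w - f y z)) +
              (μ (f x z) - μ (f x z + (f y w - f y z))) := add_le_add_right hconv _
          _ = μ (f x z) :=
              add_tsub_cancel_of_le (hμmono (f x z) hsmem _ hshmem (by linarith))
      have e3 : (μ x + μ w) + (μ z - μ w) = μ x + μ z := by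
        rw [add_assoc, add_tsub_cancel_of_le hDC]
      have h5 : μ (f x z + (f y w - f y z)) + (μ z - μ w) ≤ (μ x + μ w) + (μ z - μ w) :=
        h3.trans ((key x hx z hz).1.trans e3.symm.le)
      have hsubne : μ z - μ w ≠ ∞ := ne_top_of_le_ne_top hCne tsub_le_self
      have h6 : μ (f x z + (f y w - f y z)) ≤ μ x + μ w :=
        (ENNReal.add_le_add_iff_right hsubne).mp h5
      have hfinal : f x w ≤ f x z + (f y w - f y z) := by
        have h7 := hinv_anti h6
        rw [hinv_μ _ hshmem] at h7
        rw [(hgen' x hx w hw).2]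
        exact h7
      linarith
    · push_neg at hcase
      have hq : f y z = 0 := fzero y hy z hz hcase
      have hs : f x z = 0 := fzero x hx z hz (hcase.trans (add_le_add_left hBA _))
      rw [hq, hs, sub_zero, sub_zero]
      exact hmono x hx y hy w hw hxy
end

section
/- If a binary operation ⊗ on [0,1] satisfies property B and a binary operation ⊕ on [0,1] satisfies property A', then for all 0 ≤ x₁ ≤ x₂ ≤ 1 and 0 ≤ y₁ ≤ y₂ ≤ 1, (x₁⊗y₁) ⊕ (x₂⊗y₂) ≥ (x₁⊗y₂) ⊕ (x₂⊗y₁). -/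
open Set

def PropA' (f : ℝ → ℝ → ℝ) : Prop :=
  ∀ x y z w : ℝ, 0 ≤ x → x ≤ y → y ≤ z → z ≤ w → w ≤ 1 →
    w + x ≥ y + z → f x w ≥ f y z

theorem rearrangement_condition_of_propB_propA'
    (ot op : ℝ → ℝ → ℝ)
    (hmapsOt : ∀ x ∈ Icc (0:ℝ) 1, ∀ y ∈ Icc (0:ℝ) 1, ot x y ∈ Icc (0:ℝ) 1)
    (hmapsOp : ∀ x ∈ Icc (0:ℝ) 1, ∀ y ∈ Icc (0:ℝ) 1, op x y ∈ Icc (0:ℝ) 1)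
    (hcommOt : ∀ x ∈ Icc (0:ℝ) 1, ∀ y ∈ Icc (0:ℝ) 1, ot x y = ot y x)
    (hcommOp : ∀ x ∈ Icc (0:ℝ) 1, ∀ y ∈ Icc (0:ℝ) 1, op x y = op y x)
    (hmonoOt : ∀ x ∈ Icc (0:ℝ) 1, ∀ y ∈ Icc (0:ℝ) 1, ∀ z ∈ Icc (0:ℝ) 1, x ≤ y → ot x z ≤ ot y z)
    (hmonoOp : ∀ x ∈ Icc (0:ℝ) 1, ∀ y ∈ Icc (0:ℝ) 1, ∀ z ∈ Icc (0:ℝ) 1, x ≤ y → op x z ≤ op y z)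
    (hB : PropB ot) (hA' : PropA' op) :
    ∀ x₁ x₂ y₁ y₂ : ℝ, 0 ≤ x₁ → x₁ ≤ x₂ → x₂ ≤ 1 → 0 ≤ y₁ → y₁ ≤ y₂ → y₂ ≤ 1 →
      op (ot x₁ y₂) (ot x₂ y₁) ≤ op (ot x₁ y₁) (ot x₂ y₂) := by
  intro x₁ x₂ y₁ y₂ hx₁ hx hx₂ hy₁ hy hy₂
  have hx₁m : x₁ ∈ Icc (0:ℝ) 1 := ⟨hx₁, hx.trans hx₂⟩
  have hx₂m : x₂ ∈ Icc (0:ℝ) 1 := ⟨hx₁.trans hx, hx₂⟩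
  have hy₁m : y₁ ∈ Icc (0:ℝ) 1 := ⟨hy₁, hy.trans hy₂⟩
  have hy₂m : y₂ ∈ Icc (0:ℝ) 1 := ⟨hy₁.trans hy, hy₂⟩
  set A := ot x₁ y₁ with hA
  set B := ot x₁ y₂ with hBdef
  set C := ot x₂ y₁ with hC
  set D := ot x₂ y₂ with hD
  have hAm : A ∈ Icc (0:ℝ) 1 := hmapsOt _ hx₁m _ hy₁m
  have hBm : B ∈ Icc (0:ℝ) 1 := hmapsOt _ hx₁m _ hy₂m
  have hCm : C ∈ Icc (0:ℝ) 1 := hmapsOt _ hx₂m _ hy₁m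
  have hDm : D ∈ Icc (0:ℝ) 1 := hmapsOt _ hx₂m _ hy₂m
  -- Property B: B - A ≤ D - C
  have hBineq : B - A ≤ D - C := hB x₁ x₂ y₁ y₂ hx₁ hx hx₂ hy₁ hy hy₂
  have hsum : D + A ≥ B + C := by linarith
  -- monotonicity facts
  have hAC : A ≤ C := hmonoOt _ hx₁m _ hx₂m _ hy₁m hx
  have hAB : A ≤ B := by
    have h1 : ot y₁ x₁ ≤ ot y₂ x₁ := hmonoOt _ hy₁m _ hy₂m _ hx₁m hy
    rwa [hcommOt _ hy₁m _ hx₁m, hcommOt _ hy₂m _ hx₁m] at h1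
  have hBD : B ≤ D := hmonoOt _ hx₁m _ hx₂m _ hy₂m hx
  have hCD : C ≤ D := by
    have h1 : ot y₁ x₂ ≤ ot y₂ x₂ := hmonoOt _ hy₁m _ hy₂m _ hx₂m hy
    rwa [hcommOt _ hy₁m _ hx₂m, hcommOt _ hy₂m _ hx₂m] at h1
  rcases le_total B C with h | h
  · exact hA' A B C D hAm.1 hAB h hCD hDm.2 hsum
  · have := hA' A C B D hAm.1 hAC h hBD hDm.2 (by linarith)
    rwa [hcommOp _ hCm _ hBm] at this
end

section
/- If a binary operation ⊗ on [0,1] satisfies property A and a binary operation ⊕ on [0,1] satisfies property B', then for all 0 ≤ x₁ ≤ x₂ ≤ 1 and 0 ≤ y₁ ≤ y₂ ≤ 1, (x₁⊕y₁) ⊗ (x₂⊕y₂) ≤ (x₁⊕y₂) ⊗ (x₂⊕y₁). -/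
open Set

def PropB' (f : ℝ → ℝ → ℝ) : Prop :=
  ∀ x y z w : ℝ, 0 ≤ x → x ≤ y → y ≤ 1 → 0 ≤ z → z ≤ w → w ≤ 1 →
    f x w - f x z ≥ f y w - f y z

theorem dual_rearrangement_condition_of_propA_propB'
    (ot op : ℝ → ℝ → ℝ)
    (hmapsOt : ∀ x ∈ Icc (0:ℝ) 1, ∀ y ∈ Icc (0:ℝ) 1, ot x y ∈ Icc (0:ℝ) 1)
    (hmapsOp : ∀ x ∈ Icc (0:ℝ) 1, ∀ y ∈ Icc (0:ℝ) 1, op x y ∈ Icc (0:ℝ) 1)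
    (hcommOt : ∀ x ∈ Icc (0:ℝ) 1, ∀ y ∈ Icc (0:ℝ) 1, ot x y = ot y x)
    (hcommOp : ∀ x ∈ Icc (0:ℝ) 1, ∀ y ∈ Icc (0:ℝ) 1, op x y = op y x)
    (hmonoOt : ∀ x ∈ Icc (0:ℝ) 1, ∀ y ∈ Icc (0:ℝ) 1, ∀ z ∈ Icc (0:ℝ) 1, x ≤ y → ot x z ≤ ot y z)
    (hmonoOp : ∀ x ∈ Icc (0:ℝ) 1, ∀ y ∈ Icc (0:ℝ) 1, ∀ z ∈ Icc (0:ℝ) 1, x ≤ y → op x z ≤ op y z)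
    (hA : PropA ot) (hB' : PropB' op) :
    ∀ x₁ x₂ y₁ y₂ : ℝ, 0 ≤ x₁ → x₁ ≤ x₂ → x₂ ≤ 1 → 0 ≤ y₁ → y₁ ≤ y₂ → y₂ ≤ 1 →
      ot (op x₁ y₁) (op x₂ y₂) ≤ ot (op x₁ y₂) (op x₂ y₁) := by
  intro x₁ x₂ y₁ y₂ hx₁0 hx hx₂1 hy₁0 hy hy₂1
  have hx₁ : x₁ ∈ Icc (0:ℝ) 1 := ⟨hx₁0, hx.trans hx₂1⟩
  have hx₂ : x₂ ∈ Icc (0:ℝ) 1 := ⟨hx₁0.trans hx, hx₂1⟩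
  have hy₁ : y₁ ∈ Icc (0:ℝ) 1 := ⟨hy₁0, hy.trans hy₂1⟩
  have hy₂ : y₂ ∈ Icc (0:ℝ) 1 := ⟨hy₁0.trans hy, hy₂1⟩
  set a := op x₁ y₁ with ha
  set b := op x₂ y₂ with hb
  set c := op x₁ y₂ with hc
  set d := op x₂ y₁ with hd
  have hma : a ∈ Icc (0:ℝ) 1 := hmapsOp _ hx₁ _ hy₁
  have hmb : b ∈ Icc (0:ℝ) 1 := hmapsOp _ hx₂ _ hy₂
  have hmc : c ∈ Icc (0:ℝ) 1 := hmapsOp _ hx₁ _ hy₂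
  have hmd : d ∈ Icc (0:ℝ) 1 := hmapsOp _ hx₂ _ hy₁
  have hac : a ≤ c := by
    rw [ha, hc, hcommOp _ hx₁ _ hy₁, hcommOp _ hx₁ _ hy₂]
    exact hmonoOp _ hy₁ _ hy₂ _ hx₁ hy
  have had : a ≤ d := hmonoOp _ hx₁ _ hx₂ _ hy₁ hx
  have hcb : c ≤ b := hmonoOp _ hx₁ _ hx₂ _ hy₂ hx
  have hdb : d ≤ b := by
    rw [hd, hb, hcommOp _ hx₂ _ hy₁, hcommOp _ hx₂ _ hy₂]
    exact hmonoOp _ hy₁ _ hy₂ _ hx₂ hy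
  have hsum : b + a ≤ c + d := by
    have := hB' x₁ x₂ y₁ y₂ hx₁0 hx hx₂1 hy₁0 hy hy₂1
    rw [← ha, ← hb, ← hc, ← hd] at this
    linarith
  rcases le_total c d with h | h
  · exact hA a c d b hma.1 hac h hdb hmb.2 hsum
  · calc ot a b ≤ ot d c := hA a d c b hma.1 had h hcb hmb.2 (by linarith)
      _ = ot c d := hcommOt _ hmd _ hmc
end

section
/- If ⊗ = min and ⊕ is any uninorm on [0,1], then for all 0 ≤ x₁ ≤ x₂ ≤ 1 and 0 ≤ y₁ ≤ y₂ ≤ 1: min(x₁,y₁) ⊕ min(x₂,y₂) ≥ min(x₁,y₂) ⊕ min(x₂,y₁), and min(x₁⊕y₁, x₂⊕y₂) ≤ min(x₁⊕y₂, x₂⊕y₁). -/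
open Set

theorem min_with_uninorm_rearrangement (op : ℝ → ℝ → ℝ) (hop : IsUninorm op) :
    ∀ x₁ x₂ y₁ y₂ : ℝ, 0 ≤ x₁ → x₁ ≤ x₂ → x₂ ≤ 1 → 0 ≤ y₁ → y₁ ≤ y₂ → y₂ ≤ 1 →
      op (min x₁ y₂) (min x₂ y₁) ≤ op (min x₁ y₁) (min x₂ y₂) ∧
      min (op x₁ y₁) (op x₂ y₂) ≤ min (op x₁ y₂) (op x₂ y₁) := by
  obtain ⟨hmem, hcomm, _, hmono, _⟩ := hop
  intro x₁ x₂ y₁ y₂ hx0 hx12 hx21 hy0 hy12 hy21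
  have hx₁ : x₁ ∈ Icc (0:ℝ) 1 := ⟨hx0, hx12.trans hx21⟩
  have hx₂ : x₂ ∈ Icc (0:ℝ) 1 := ⟨hx0.trans hx12, hx21⟩
  have hy₁ : y₁ ∈ Icc (0:ℝ) 1 := ⟨hy0, hy12.trans hy21⟩
  have hy₂ : y₂ ∈ Icc (0:ℝ) 1 := ⟨hy0.trans hy12, hy21⟩
  have hmin : ∀ a b : ℝ, a ∈ Icc (0:ℝ) 1 → b ∈ Icc (0:ℝ) 1 → min a b ∈ Icc (0:ℝ) 1 := by
    intro a b ha hb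
    exact ⟨le_min ha.1 hb.1, (min_le_left a b).trans ha.2⟩
  have ha : min x₁ y₂ ∈ Icc (0:ℝ) 1 := hmin _ _ hx₁ hy₂
  have hb : min x₂ y₁ ∈ Icc (0:ℝ) 1 := hmin _ _ hx₂ hy₁
  have hc : min x₁ y₁ ∈ Icc (0:ℝ) 1 := hmin _ _ hx₁ hy₁
  have hd : min x₂ y₂ ∈ Icc (0:ℝ) 1 := hmin _ _ hx₂ hy₂
  have hmono2 : ∀ x ∈ Icc (0:ℝ) 1, ∀ y ∈ Icc (0:ℝ) 1, ∀ z ∈ Icc (0:ℝ) 1,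
      y ≤ z → op x y ≤ op x z := by
    intro x hx y hy z hz hyz
    rw [hcomm x hx y hy, hcomm x hx z hz]
    exact hmono y hy z hz x hx hyz
  constructor
  · have hkey : min (min x₁ y₂) (min x₂ y₁) = min x₁ y₁ := by
      rw [min_min_min_comm, min_eq_left hx12, min_comm y₂ y₁, min_eq_left hy12]
    have hd1 : min x₁ y₂ ≤ min x₂ y₂ := min_le_min hx12 le_rfl
    have hd2 : min x₂ y₁ ≤ min x₂ y₂ := min_le_min le_rfl hy12
    rcases le_total (min x₁ y₂) (min x₂ y₁) with h | h
    · rw [show min x₁ y₁ = min x₁ y₂ by rw [← hkey, min_eq_left h]]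
      exact hmono2 _ ha _ hb _ hd hd2
    · rw [show min x₁ y₁ = min x₂ y₁ by rw [← hkey, min_eq_right h],
        hcomm _ ha _ hb]
      exact hmono2 _ hb _ ha _ hd hd1
  · exact le_min (min_le_of_left_le (hmono2 _ hx₁ _ hy₁ _ hy₂ hy12))
      (min_le_of_left_le (hmono _ hx₁ _ hx₂ _ hy₁ hx12))
end

section
/- Let ⊗ be the drastic T-norm T_d (T_d(x,y) = min(x,y) if max(x,y) = 1, else 0) and ⊕ a disjunctive uninorm (0 ⊕ 1 = 1). Then for all 0 ≤ x₁ ≤ x₂ ≤ 1 and 0 ≤ y₁ ≤ y₂ ≤ 1: (x₁⊗y₁) ⊕ (x₂⊗y₂) ≥ (x₁⊗y₂) ⊕ (x₂⊗y₁). -/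
open Set

noncomputable def Td (x y : ℝ) : ℝ := if max x y = 1 then min x y else 0

theorem drastic_tnorm_with_disjunctive_uninorm (op : ℝ → ℝ → ℝ)
    (hop : IsUninorm op) (hdisj : op 0 1 = 1) :
    ∀ x₁ x₂ y₁ y₂ : ℝ, 0 ≤ x₁ → x₁ ≤ x₂ → x₂ ≤ 1 → 0 ≤ y₁ → y₁ ≤ y₂ → y₂ ≤ 1 →
      op (Td x₁ y₂) (Td x₂ y₁) ≤ op (Td x₁ y₁) (Td x₂ y₂) := by
  obtain ⟨hrange, hcomm, hassoc, hmono, e, he, hid⟩ := hop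
  intro x₁ x₂ y₁ y₂ hx0 hx12 hx21 hy0 hy12 hy21
  have hx1m : x₁ ∈ Icc (0:ℝ) 1 := ⟨hx0, hx12.trans hx21⟩
  have hx2m : x₂ ∈ Icc (0:ℝ) 1 := ⟨hx0.trans hx12, hx21⟩
  have hy1m : y₁ ∈ Icc (0:ℝ) 1 := ⟨hy0, hy12.trans hy21⟩
  have hy2m : y₂ ∈ Icc (0:ℝ) 1 := ⟨hy0.trans hy12, hy21⟩
  have hTd : ∀ x ∈ Icc (0:ℝ) 1, ∀ y ∈ Icc (0:ℝ) 1, Td x y ∈ Icc (0:ℝ) 1 := by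
    intro x hx y hy
    unfold Td; split
    · exact ⟨le_min hx.1 hy.1, min_le_of_left_le hx.2⟩
    · exact ⟨le_refl 0, zero_le_one⟩
  have hmono2 : ∀ x ∈ Icc (0:ℝ) 1, ∀ y ∈ Icc (0:ℝ) 1, ∀ z ∈ Icc (0:ℝ) 1,
      y ≤ z → op x y ≤ op x z := by
    intro x hx y hy z hz h
    rw [hcomm x hx y hy, hcomm x hx z hz]
    exact hmono y hy z hz x hx h
  have h01 : (0:ℝ) ∈ Icc (0:ℝ) 1 := ⟨le_refl 0, zero_le_one⟩
  have h11 : (1:ℝ) ∈ Icc (0:ℝ) 1 := ⟨zero_le_one, le_refl 1⟩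
  have htop : ∀ t ∈ Icc (0:ℝ) 1, op t 1 = 1 := by
    intro t ht
    refine le_antisymm (hrange t ht 1 h11).2 ?_
    calc (1:ℝ) = op 0 1 := hdisj.symm
    _ ≤ op t 1 := hmono 0 h01 t ht 1 h11 ht.1
  have Td1r : ∀ a : ℝ, 0 ≤ a → a ≤ 1 → Td a 1 = a := by
    intro a _ ha; simp [Td, max_eq_right ha, min_eq_left ha]
  have Td1l : ∀ a : ℝ, 0 ≤ a → a ≤ 1 → Td 1 a = a := by
    intro a _ ha; simp [Td, max_eq_left ha, min_eq_right ha]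
  have Td0 : ∀ a b : ℝ, a < 1 → b < 1 → Td a b = 0 := by
    intro a b ha hb
    have : max a b ≠ 1 := ne_of_lt (max_lt ha hb)
    simp [Td, this]
  by_cases h2 : x₂ = 1
  · subst h2
    by_cases h3 : y₁ = 1
    · subst h3
      have hy2 : y₂ = 1 := le_antisymm hy21 hy12
      subst hy2
      rw [Td1r x₁ hx0 hx12, Td1l 1 zero_le_one le_rfl]
    · have hy1lt : y₁ < 1 := lt_of_le_of_ne (hy12.trans hy21) h3
      rw [Td1l y₁ hy0 hy1lt.le]
      by_cases h1 : x₁ = 1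
      · subst h1
        rw [Td1l y₂ (hy0.trans hy12) hy21, Td1l y₁ hy0 hy1lt.le]
        exact (hcomm y₂ hy2m y₁ hy1m).le
      · have hx1lt : x₁ < 1 := lt_of_le_of_ne (hx12.trans hx21) h1
        rw [Td0 x₁ y₁ hx1lt hy1lt]
        by_cases h4 : y₂ = 1
        · subst h4
          rw [Td1r x₁ hx0 hx1lt.le, Td1l 1 zero_le_one le_rfl, htop 0 h01]
          exact (hrange x₁ hx1m y₁ hy1m).2
        · have hy2lt : y₂ < 1 := lt_of_le_of_ne hy21 h4
          rw [Td0 x₁ y₂ hx1lt hy2lt, Td1l y₂ (hy0.trans hy12) hy21]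
          exact hmono2 0 h01 y₁ hy1m y₂ hy2m hy12
  · have hx2lt : x₂ < 1 := lt_of_le_of_ne hx21 h2
    have hx1lt : x₁ < 1 := lt_of_le_of_lt hx12 hx2lt
    by_cases h3 : y₁ = 1
    · subst h3
      have hy2 : y₂ = 1 := le_antisymm hy21 hy12
      subst hy2
      rw [Td1r x₁ hx0 hx1lt.le, Td1r x₂ (hx0.trans hx12) hx2lt.le]
    · have hy1lt : y₁ < 1 := lt_of_le_of_ne (hy12.trans hy21) h3
      rw [Td0 x₂ y₁ hx2lt hy1lt, Td0 x₁ y₁ hx1lt hy1lt]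
      by_cases h4 : y₂ = 1
      · subst h4
        rw [Td1r x₁ hx0 hx1lt.le, Td1r x₂ (hx0.trans hx12) hx2lt.le]
        calc op x₁ 0 = op 0 x₁ := hcomm x₁ hx1m 0 h01
        _ ≤ op 0 x₂ := hmono2 0 h01 x₁ hx1m x₂ hx2m hx12
      · have hy2lt : y₂ < 1 := lt_of_le_of_ne hy21 h4
        rw [Td0 x₁ y₂ hx1lt hy2lt, Td0 x₂ y₂ hx2lt hy2lt]
end

section
/- Let ⊕ be the drastic T-conorm T_d' (T_d'(x,y) = max(x,y) if min(x,y) = 0, else 1) and ⊗ a conjunctive uninorm (0 ⊗ 1 = 0). Then for all 0 ≤ x₁ ≤ x₂ ≤ 1 and 0 ≤ y₁ ≤ y₂ ≤ 1: (x₁⊕y₁) ⊗ (x₂⊕y₂) ≤ (x₁⊕y₂) ⊗ (x₂⊕y₁). -/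
open Set

noncomputable def Td' (x y : ℝ) : ℝ := if min x y = 0 then max x y else 1

lemma Td'_zero_left {a : ℝ} (ha : 0 ≤ a) : Td' 0 a = a := by
  simp [Td', min_eq_left ha, max_eq_right ha]

lemma Td'_zero_right {a : ℝ} (ha : 0 ≤ a) : Td' a 0 = a := by
  simp [Td', min_eq_right ha, max_eq_left ha]

lemma Td'_pos {a b : ℝ} (ha : 0 < a) (hb : 0 < b) : Td' a b = 1 := by
  have : min a b ≠ 0 := ne_of_gt (lt_min ha hb)
  simp [Td', this]

lemma Td'_mem {a b : ℝ} (ha : a ∈ Icc (0:ℝ) 1) (hb : b ∈ Icc (0:ℝ) 1) :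
    Td' a b ∈ Icc (0:ℝ) 1 := by
  unfold Td'
  split
  · exact ⟨le_max_of_le_left ha.1, max_le ha.2 hb.2⟩
  · exact ⟨zero_le_one, le_refl 1⟩

theorem drastic_tconorm_with_conjunctive_uninorm (ot : ℝ → ℝ → ℝ)
    (hot : IsUninorm ot) (hconj : ot 0 1 = 0) :
    ∀ x₁ x₂ y₁ y₂ : ℝ, 0 ≤ x₁ → x₁ ≤ x₂ → x₂ ≤ 1 → 0 ≤ y₁ → y₁ ≤ y₂ → y₂ ≤ 1 →
      ot (Td' x₁ y₁) (Td' x₂ y₂) ≤ ot (Td' x₁ y₂) (Td' x₂ y₁) := by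
  obtain ⟨hb, hc, -, hm, -⟩ := hot
  intro x₁ x₂ y₁ y₂ hx₁ hx12 hx₂ hy₁ hy12 hy₂
  have h01 : (0:ℝ) ∈ Icc (0:ℝ) 1 := ⟨le_refl 0, zero_le_one⟩
  have h11 : (1:ℝ) ∈ Icc (0:ℝ) 1 := ⟨zero_le_one, le_refl 1⟩
  have hx1m : x₁ ∈ Icc (0:ℝ) 1 := ⟨hx₁, hx12.trans hx₂⟩
  have hx2m : x₂ ∈ Icc (0:ℝ) 1 := ⟨hx₁.trans hx12, hx₂⟩
  have hy1m : y₁ ∈ Icc (0:ℝ) 1 := ⟨hy₁, hy12.trans hy₂⟩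
  have hy2m : y₂ ∈ Icc (0:ℝ) 1 := ⟨hy₁.trans hy12, hy₂⟩
  have hzero : ∀ t ∈ Icc (0:ℝ) 1, ot 0 t = 0 := by
    intro t ht
    have h1 : ot t 0 ≤ ot 1 0 := hm t ht 1 h11 0 h01 ht.2
    rw [hc t ht 0 h01, hc 1 h11 0 h01, hconj] at h1
    exact le_antisymm h1 (hb 0 h01 t ht).1
  rcases eq_or_lt_of_le hx₁ with hx0 | hx0
  · subst hx0
    rcases eq_or_lt_of_le hy₁ with hy0 | hy0
    · subst hy0
      rw [Td'_zero_left (le_refl 0)]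
      rw [hzero _ (Td'_mem hx2m hy2m)]
      exact (hb _ (Td'_mem hx1m hy2m) _ (Td'_mem hx2m hy1m)).1
    · -- x₁ = 0, y₁ > 0
      rw [Td'_zero_left hy₁, Td'_zero_left (hy₁.trans hy12)]
      rcases eq_or_lt_of_le hx12 with hx20 | hx20
      · subst hx20
        rw [Td'_zero_left (hy₁.trans hy12), Td'_zero_left hy₁]
        rw [hc y₁ hy1m y₂ hy2m]
      · rw [Td'_pos hx20 (hy0.trans_le hy12), Td'_pos hx20 hy0]
        exact hm y₁ hy1m y₂ hy2m 1 h11 hy12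
  · rcases eq_or_lt_of_le hy₁ with hy0 | hy0
    · subst hy0
      rw [Td'_zero_right hx₁, Td'_zero_right (hx₁.trans hx12)]
      rcases eq_or_lt_of_le hy12 with hy20 | hy20
      · subst hy20
        rw [Td'_zero_right hx₁, Td'_zero_right (hx₁.trans hx12)]
      · rw [Td'_pos (hx0.trans_le hx12) hy20, Td'_pos hx0 hy20]
        rw [hc 1 h11 x₂ hx2m]
        exact hm x₁ hx1m x₂ hx2m 1 h11 hx12
    · rw [Td'_pos hx0 hy0, Td'_pos (hx0.trans_le hx12) (hy0.trans_le hy12),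
          Td'_pos hx0 (hy0.trans_le hy12), Td'_pos (hx0.trans_le hx12) hy0]
end

section
/- Let ⊗ be the nilpotent minimum T_n (T_n(x,y) = min(x,y) if x+y > 1, else 0) and ⊕ the Łukasiewicz T-norm T_L (T_L(x,y) = max(x+y−1, 0)). Then for all 0 ≤ x₁ ≤ x₂ ≤ 1 and 0 ≤ y₁ ≤ y₂ ≤ 1: (x₁⊗y₁) ⊕ (x₂⊗y₂) ≥ (x₁⊗y₂) ⊕ (x₂⊗y₁) and (x₁⊕y₁) ⊗ (x₂⊕y₂) ≤ (x₁⊕y₂) ⊗ (x₂⊕y₁). -/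
noncomputable def Tn (x y : ℝ) : ℝ := if 1 < x + y then min x y else 0

noncomputable def TL (x y : ℝ) : ℝ := max (x + y - 1) 0

lemma Tn_nonneg (x y : ℝ) (hx : 0 ≤ x) (hy : 0 ≤ y) : 0 ≤ Tn x y := by
  unfold Tn; split_ifs
  · exact le_min hx hy
  · exact le_refl 0

lemma Tn_le_left (x y : ℝ) (hx : 0 ≤ x) : Tn x y ≤ x := by
  unfold Tn; split_ifs
  · exact min_le_left _ _
  · exact hx

lemma Tn_le_right (x y : ℝ) (hy : 0 ≤ y) : Tn x y ≤ y := by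
  unfold Tn; split_ifs
  · exact min_le_right _ _
  · exact hy

lemma TL_nonneg (x y : ℝ) : 0 ≤ TL x y := le_max_right _ _

lemma min_supermod (a b c d : ℝ) (hab : a ≤ b) (hcd : c ≤ d) :
    min a d + min b c ≤ min a c + min b d := by
  rcases le_total a c with h1 | h1 <;> rcases le_total b d with h2 | h2 <;>
  rcases le_total a d with h3 | h3 <;> rcases le_total b c with h4 | h4 <;>
  simp [min_def, *] <;> linarith

theorem nilpotent_min_with_lukasiewicz :
    ∀ x₁ x₂ y₁ y₂ : ℝ, 0 ≤ x₁ → x₁ ≤ x₂ → x₂ ≤ 1 → 0 ≤ y₁ → y₁ ≤ y₂ → y₂ ≤ 1 →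
      TL (Tn x₁ y₂) (Tn x₂ y₁) ≤ TL (Tn x₁ y₁) (Tn x₂ y₂) ∧
      Tn (TL x₁ y₁) (TL x₂ y₂) ≤ Tn (TL x₁ y₂) (TL x₂ y₁) := by
  intro x₁ x₂ y₁ y₂ h1 h2 h3 h4 h5 h6
  have hx2 : 0 ≤ x₂ := le_trans h1 h2
  have hy2 : 0 ≤ y₂ := le_trans h4 h5
  constructor
  · -- Part 1
    by_cases h : 1 < x₁ + y₁
    · have h12 : 1 < x₁ + y₂ := by linarith
      have h21 : 1 < x₂ + y₁ := by linarith
      have h22 : 1 < x₂ + y₂ := by linarith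
      unfold TL Tn
      rw [if_pos h, if_pos h12, if_pos h21, if_pos h22]
      have := min_supermod x₁ x₂ y₁ y₂ h2 h5
      exact max_le_max (by linarith) le_rfl
    · -- LHS is 0
      have ha : Tn x₁ y₂ ≤ x₁ := Tn_le_left _ _ h1
      have hb : Tn x₂ y₁ ≤ y₁ := Tn_le_right _ _ h4
      unfold TL
      apply max_le
      · have : Tn x₁ y₂ + Tn x₂ y₁ - 1 ≤ 0 := by linarith
        exact le_trans this (le_max_right _ _)
      · exact le_max_right _ _
  · -- Part 2
    by_cases h : 1 < x₁ + y₁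
    · have h12 : 1 < x₁ + y₂ := by linarith
      have h21 : 1 < x₂ + y₁ := by linarith
      have h22 : 1 < x₂ + y₂ := by linarith
      unfold TL
      rw [max_eq_left (by linarith : (0:ℝ) ≤ x₁ + y₁ - 1),
          max_eq_left (by linarith : (0:ℝ) ≤ x₂ + y₂ - 1),
          max_eq_left (by linarith : (0:ℝ) ≤ x₁ + y₂ - 1),
          max_eq_left (by linarith : (0:ℝ) ≤ x₂ + y₁ - 1)]
      unfold Tn
      split_ifs with hA hB hB
      · exact le_trans (min_le_left _ _) (le_min (by linarith) (by linarith))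
      · exfalso; apply hB; linarith
      · exact le_min (by linarith) (by linarith)
      · exact le_rfl
    · -- TL x₁ y₁ = 0, so LHS = 0
      have hp : TL x₁ y₁ = 0 := by
        unfold TL; exact max_eq_right (by linarith)
      have hs : TL x₂ y₂ ≤ 1 := by
        unfold TL; apply max_le <;> linarith
      have hL : Tn (TL x₁ y₁) (TL x₂ y₂) = 0 := by
        unfold Tn
        rw [if_neg]
        rw [hp]; linarith
      rw [hL]
      exact Tn_nonneg _ _ (TL_nonneg _ _) (TL_nonneg _ _)
end

section
/- The nilpotent minimum T_n satisfies property A: for all 0 ≤ x ≤ y ≤ z ≤ w ≤ 1 with w + x ≤ y + z, T_n(x,w) ≤ T_n(y,z), where T_n(a,b) = min(a,b) if a+b > 1 and 0 otherwise. -/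
theorem nilpotent_min_propA :
    ∀ x y z w : ℝ, 0 ≤ x → x ≤ y → y ≤ z → z ≤ w → w ≤ 1 →
      w + x ≤ y + z → Tn x w ≤ Tn y z := by
  intro x y z w hx hxy hyz hzw hw1 hsum
  unfold Tn
  split_ifs with h1 h2 h2
  · simp [min_eq_left (le_trans hxy (le_trans hyz hzw)), min_eq_left hyz, hxy]
  · exfalso; linarith
  · have : (0:ℝ) ≤ y := le_trans hx hxy
    simp [le_min this (le_trans this hyz)]
  · exact le_refl 0
end

section
/- Let f₁, f₂ be T-norms satisfying property A, and let f be the ordinal sum of (f₁, (0,a)) and (f₂, (a,1)) for some a ∈ (0,1): f(x,y) = a·f₁(x/a, y/a) if x,y ∈ [0,a], f(x,y) = a + (1−a)·f₂((x−a)/(1−a), (y−a)/(1−a)) if x,y ∈ [a,1], and f(x,y) = min(x,y) otherwise. Then f satisfies property A. -/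
open Set

lemma tnorm_zero_left (f : ℝ → ℝ → ℝ) (hf : IsTnorm f) :
    ∀ t ∈ Icc (0:ℝ) 1, f 0 t = 0 := by
  obtain ⟨hb, hc, -, hm, hid⟩ := hf
  intro t ht
  have h0 : (0:ℝ) ∈ Icc (0:ℝ) 1 := ⟨le_refl _, by norm_num⟩
  have h1 : (1:ℝ) ∈ Icc (0:ℝ) 1 := ⟨by norm_num, le_refl _⟩
  have e1 : f 0 t = f t 0 := hc 0 h0 t ht
  have e2 : f t 0 ≤ f 1 0 := hm t ht 1 h1 0 h0 ht.2
  have e3 : f 1 0 = f 0 1 := hc 1 h1 0 h0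
  have e4 : f 0 1 = 0 := hid 0 h0
  have e5 := (hb 0 h0 t ht).1
  linarith

theorem ordinal_sum_propA (f f₁ f₂ : ℝ → ℝ → ℝ) (a : ℝ)
    (ha0 : 0 < a) (ha1 : a < 1)
    (hf₁ : IsTnorm f₁) (hf₂ : IsTnorm f₂)
    (hA₁ : PropA f₁) (hA₂ : PropA f₂)
    (hf : ∀ x ∈ Icc (0:ℝ) 1, ∀ y ∈ Icc (0:ℝ) 1,
      f x y = if x ∈ Icc (0:ℝ) a ∧ y ∈ Icc (0:ℝ) a then a * f₁ (x / a) (y / a)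
        else if x ∈ Icc a 1 ∧ y ∈ Icc a 1 then
          a + (1 - a) * f₂ ((x - a) / (1 - a)) ((y - a) / (1 - a))
        else min x y) :
    PropA f := by
  have h1a : (0:ℝ) < 1 - a := by linarith
  intro x y z w hx hxy hyz hzw hw1 hsum
  have hx1 : x ≤ 1 := by linarith
  have hy0 : 0 ≤ y := by linarith
  have hz0 : 0 ≤ z := by linarith
  have hw0 : 0 ≤ w := by linarith
  have hy1 : y ≤ 1 := by linarith
  have hz1 : z ≤ 1 := by linarith
  have hxI : x ∈ Icc (0:ℝ) 1 := ⟨hx, hx1⟩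
  have hyI : y ∈ Icc (0:ℝ) 1 := ⟨hy0, hy1⟩
  have hzI : z ∈ Icc (0:ℝ) 1 := ⟨hz0, hz1⟩
  have hwI : w ∈ Icc (0:ℝ) 1 := ⟨hw0, hw1⟩
  rw [hf x hxI w hwI, hf y hyI z hzI]
  by_cases hwa : w ≤ a
  · -- all in [0, a]
    rw [if_pos ⟨⟨hx, by linarith⟩, ⟨hw0, hwa⟩⟩,
        if_pos ⟨⟨hy0, by linarith⟩, ⟨hz0, by linarith⟩⟩]
    have key := hA₁ (x/a) (y/a) (z/a) (w/a)
      (by positivity) (by gcongr) (by gcongr) (by gcongr)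
      ((div_le_one ha0).2 hwa)
      (by rw [← add_div, ← add_div]; gcongr)
    exact mul_le_mul_of_nonneg_left key ha0.le
  · push_neg at hwa
    by_cases hxa : a ≤ x
    · -- all relevant in [a, 1]
      have hxw1 : ¬ (x ∈ Icc (0:ℝ) a ∧ w ∈ Icc (0:ℝ) a) := by
        rintro ⟨-, -, h⟩; linarith
      rw [if_neg hxw1, if_pos ⟨⟨hxa, hx1⟩, ⟨by linarith, hw1⟩⟩]
      by_cases hza : z ≤ a
      · -- then x = y = z = a
        have hxe : x = a := le_antisymm (by linarith) hxa
        have hye : y = a := le_antisymm (by linarith) (by linarith)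
        have hze : z = a := le_antisymm hza (by linarith)
        rw [if_pos ⟨⟨hy0, by linarith⟩, ⟨hz0, hza⟩⟩, hxe, hye, hze]
        have e1 : f₁ (a/a) (a/a) = 1 := by
          rw [div_self ha0.ne']
          exact hf₁.2.2.2.2 1 ⟨by norm_num, le_refl _⟩
        have e2 : ((a:ℝ) - a) / (1 - a) = 0 := by rw [sub_self, zero_div]
        rw [e1, e2]
        have hwm : (w - a) / (1 - a) ∈ Icc (0:ℝ) 1 := by
          constructor
          · exact div_nonneg (by linarith) h1a.le
          · rw [div_le_one h1a]; linarith
        rw [tnorm_zero_left f₂ hf₂ _ hwm]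
        ring_nf
        linarith
      · push_neg at hza
        rw [if_neg (by rintro ⟨-, -, h⟩; linarith),
            if_pos ⟨⟨by linarith, hy1⟩, ⟨by linarith, hz1⟩⟩]
        have key := hA₂ ((x-a)/(1-a)) ((y-a)/(1-a)) ((z-a)/(1-a)) ((w-a)/(1-a))
          (div_nonneg (by linarith) h1a.le) (by gcongr) (by gcongr) (by gcongr)
          (by rw [div_le_one h1a]; linarith)
          (by rw [← add_div, ← add_div, div_le_div_iff_of_pos_right h1a]; linarith)
        have := mul_le_mul_of_nonneg_left key h1a.le
        linarith
    · push_neg at hxa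
      -- f x w = min x w = x
      have hxw1 : ¬ (x ∈ Icc (0:ℝ) a ∧ w ∈ Icc (0:ℝ) a) := by
        rintro ⟨-, -, h⟩; linarith
      have hxw2 : ¬ (x ∈ Icc a 1 ∧ w ∈ Icc a 1) := by
        rintro ⟨⟨h, -⟩, -⟩; linarith
      rw [if_neg hxw1, if_neg hxw2, min_eq_left (by linarith)]
      by_cases hza : z ≤ a
      · rw [if_pos ⟨⟨hy0, by linarith⟩, ⟨hz0, hza⟩⟩]
        -- x ≤ y + z - a ≤ a f₁(y/a, z/a)
        have hx' : (0:ℝ) ≤ (y + z - a) / a := by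
          apply div_nonneg _ ha0.le; linarith
        have key := hA₁ ((y+z-a)/a) (y/a) (z/a) 1
          hx'
          (by rw [div_le_div_iff_of_pos_right ha0]; linarith)
          (by gcongr)
          ((div_le_one ha0).2 (by linarith))
          (le_refl 1)
          (by rw [← add_div, le_div_iff₀ ha0, add_mul, one_mul,
                  div_mul_cancel₀ _ ha0.ne']; linarith)
        have hm : (y+z-a)/a ∈ Icc (0:ℝ) 1 := by
          constructor
          · exact hx'
          · rw [div_le_one ha0]; linarith
        rw [hf₁.2.2.2.2 _ hm] at key
        have := mul_le_mul_of_nonneg_left key ha0.le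
        rw [mul_div_cancel₀ _ ha0.ne'] at this
        linarith
      · push_neg at hza
        by_cases hya : a ≤ y
        · rw [if_neg (by rintro ⟨-, -, h⟩; linarith),
              if_pos ⟨⟨hya, hy1⟩, ⟨by linarith, hz1⟩⟩]
          have hmem : f₂ ((y-a)/(1-a)) ((z-a)/(1-a)) ∈ Icc (0:ℝ) 1 := by
            apply hf₂.1
            · constructor
              · exact div_nonneg (by linarith) h1a.le
              · rw [div_le_one h1a]; linarith
            · constructor
              · apply div_nonneg _ h1a.le; linarith
              · rw [div_le_one h1a]; linarith
          nlinarith [hmem.1]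
        · push_neg at hya
          rw [if_neg (by rintro ⟨-, -, h⟩; linarith),
              if_neg (by rintro ⟨⟨h, -⟩, -⟩; linarith),
              min_eq_left hyz]
          exact hxy
end

section
/- Let ⊗ and ⊕ be uninorms on [0,1] such that for all 0 ≤ x₁ ≤ x₂ ≤ 1, 0 ≤ y₁ ≤ y₂ ≤ 1: (x₁⊗y₁) ⊕ (x₂⊗y₂) ≥ (x₁⊗y₂) ⊕ (x₂⊗y₁). Let a₁,…,a_{2n} ∈ [0,1] and let b₁ ≤ … ≤ b_{2n} be their sorted rearrangement. Then ⊕_{i=1}^n (b_i ⊗ b_{2n−i+1}) ≤ ⊕_{i=1}^n (a_{2i−1} ⊗ a_{2i}) ≤ ⊕_{i=1}^n (b_{2i−1} ⊗ b_{2i}). -/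
open Set

namespace RearrangeAux

/-- clamp to [0,1] -/
def cl (x : ℝ) : ℝ := max 0 (min 1 x)

lemma cl_mem (x : ℝ) : cl x ∈ Icc (0:ℝ) 1 := by
  constructor
  · exact le_max_left _ _
  · exact max_le (by norm_num) (min_le_left _ _)

lemma cl_eq_self {x : ℝ} (hx : x ∈ Icc (0:ℝ) 1) : cl x = x := by
  unfold cl
  rw [min_eq_right hx.2, max_eq_right hx.1]

lemma cl_mono : Monotone cl := by
  intro x y h
  exact max_le_max le_rfl (min_le_min le_rfl h)

def flat : List (ℝ × ℝ) → List ℝ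
  | [] => []
  | p :: L => p.1 :: p.2 :: flat L

lemma flat_length (L : List (ℝ × ℝ)) : (flat L).length = 2 * L.length := by
  induction L with
  | nil => rfl
  | cons p L ih => simp [flat, ih]; omega

def val (f g : ℝ → ℝ → ℝ) (e : ℝ) : List (ℝ × ℝ) → ℝ
  | [] => e
  | p :: L => g (f p.1 p.2) (val f g e L)

def pairup : List ℝ → List (ℝ × ℝ)
  | x :: y :: t => (x, y) :: pairup t
  | _ => []

lemma flat_cons (p : ℝ × ℝ) (L : List (ℝ × ℝ)) : flat (p :: L) = p.1 :: p.2 :: flat L := rfl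

lemma val_cons (f g : ℝ → ℝ → ℝ) (e : ℝ) (p : ℝ × ℝ) (L : List (ℝ × ℝ)) :
    val f g e (p :: L) = g (f p.1 p.2) (val f g e L) := rfl

lemma pairup_cons (x y : ℝ) (t : List ℝ) : pairup (x :: y :: t) = (x, y) :: pairup t := rfl

def pairopp (l : List ℝ) : List (ℝ × ℝ) := (l.zip l.reverse).take (l.length / 2)

lemma pairopp_concat (x w : ℝ) (l : List ℝ) :
    pairopp (x :: (l ++ [w])) = (x, w) :: pairopp l := by
  unfold pairopp
  have h1 : (x :: (l ++ [w])).reverse = w :: (l.reverse ++ [x]) := by simp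
  have h2 : (l ++ [w]).zip (l.reverse ++ [x]) = l.zip l.reverse ++ [(w, x)] := by
    rw [List.zip_append (by simp)]
    rfl
  have h3 : (x :: (l ++ [w])).length / 2 = l.length / 2 + 1 := by
    simp
    omega
  rw [h1, List.zip_cons_cons, h2, h3, List.take_succ_cons]
  congr 1
  rw [List.take_append_of_le_length]
  rw [List.length_zip]
  simp [Nat.div_le_self]

lemma flat_pairup : ∀ (m : ℕ) (s : List ℝ), s.length = 2 * m → flat (pairup s) = s := by
  intro m
  induction m with
  | zero =>
    intro s hs
    rw [Nat.mul_zero, List.length_eq_zero_iff] at hs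
    subst hs; rfl
  | succ m ih =>
    intro s hs
    match s with
    | x :: y :: t =>
      have : t.length = 2 * m := by simp at hs; omega
      rw [pairup, flat, ih t this]

section Core

variable (f g : ℝ → ℝ → ℝ) (e : ℝ)
variable (hfc : ∀ x y, f x y = f y x)
variable (hgc : ∀ x y, g x y = g y x)
variable (hga : ∀ x y z, g (g x y) z = g x (g y z))
variable (hgm : ∀ x y z : ℝ, x ≤ y → g x z ≤ g y z)

include hgc hga in
lemma val_left_comm (A B C : ℝ) : g A (g B C) = g B (g A C) := by
  rw [← hga, hgc A B, hga]

include hfc hgc hga in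
lemma extract (x : ℝ) :
    ∀ (L : List (ℝ × ℝ)), x ∈ flat L →
      ∃ u L', val f g e L = val f g e ((x, u) :: L') ∧ (flat L).Perm (x :: u :: flat L') := by
  intro L
  induction L with
  | nil => intro h; simp [flat] at h
  | cons p L ih =>
    intro hx
    rw [flat_cons] at hx
    rcases List.mem_cons.mp hx with h1 | hx2
    · refine ⟨p.2, L, ?_, ?_⟩
      · rw [h1]
      · rw [h1]
        exact List.Perm.refl _
    · rcases List.mem_cons.mp hx2 with h2 | h3
      · refine ⟨p.1, L, ?_, ?_⟩
        · rw [h2]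
          show g (f p.1 p.2) (val f g e L) = g (f p.2 p.1) (val f g e L)
          rw [hfc p.1 p.2]
        · rw [h2]
          exact List.Perm.swap _ _ _
      · obtain ⟨u, L', hv, hp⟩ := ih h3
        refine ⟨u, (p.1, p.2) :: L', ?_, ?_⟩
        · show g (f p.1 p.2) (val f g e L) = g (f x u) (g (f p.1 p.2) (val f g e L'))
          rw [hv]
          show g (f p.1 p.2) (g (f x u) (val f g e L')) = _
          exact val_left_comm g hgc hga _ _ _
        · show (p.1 :: p.2 :: flat L).Perm (x :: u :: p.1 :: p.2 :: flat L')
          refine ((hp.cons p.2).cons p.1).trans ?_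
          have hq : List.Perm (([p.1, p.2] ++ [x, u]) ++ flat L') (([x, u] ++ [p.1, p.2]) ++ flat L') :=
            List.perm_append_comm.append_right _
          simpa using hq

lemma sorted_le_getLast : ∀ (l : List ℝ), l.Pairwise (· ≤ ·) → ∀ a ∈ l, ∀ (h : l ≠ []),
    a ≤ l.getLast h := by
  intro l
  induction l with
  | nil => intro _ a ha; simp at ha
  | cons x t ih =>
    intro hs a ha h
    rcases t.eq_nil_or_concat with rfl | ⟨l2, w, hc⟩
    · simp at ha; simp [ha]
    · rw [List.concat_eq_append] at hc
      subst hc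
      have ht : l2 ++ [w] ≠ [] := by simp
      rw [List.getLast_cons ht]
      rcases List.mem_cons.mp ha with rfl | ha2
      · have hm : (l2 ++ [w]).getLast ht ∈ l2 ++ [w] := List.getLast_mem ht
        exact List.rel_of_pairwise_cons hs hm
      · exact ih hs.of_cons a ha2 ht

include hfc hgc hga hgm in
lemma core_upper
    (hx : ∀ x₁ x₂ y₁ y₂ : ℝ, x₁ ∈ Icc (0:ℝ) 1 → x₂ ∈ Icc (0:ℝ) 1 → y₁ ∈ Icc (0:ℝ) 1 →
      y₂ ∈ Icc (0:ℝ) 1 → x₁ ≤ x₂ → y₁ ≤ y₂ → g (f x₁ y₂) (f x₂ y₁) ≤ g (f x₁ y₁) (f x₂ y₂)) :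
    ∀ (m : ℕ) (L : List (ℝ × ℝ)) (s : List ℝ), L.length = m →
      (∀ x ∈ s, x ∈ Icc (0:ℝ) 1) → s.Pairwise (· ≤ ·) → (flat L).Perm s →
      val f g e L ≤ val f g e (pairup s) := by
  intro m
  induction m with
  | zero =>
    intro L s hL _ _ hp
    rw [List.length_eq_zero_iff] at hL; subst hL
    have hs0 : s.length = 0 := hp.length_eq.symm
    rw [List.length_eq_zero_iff] at hs0
    subst hs0
    exact le_rfl
  | succ m ih =>
    intro L s hL hIcc hsort hp
    have hslen : s.length = 2 * (m+1) := by
      rw [← hp.length_eq, flat_length, hL]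
    obtain ⟨x, y, t, rfl⟩ : ∃ x y t, s = x :: y :: t := by
      match s with
      | [] => exact absurd hslen (by simp only [List.length_nil]; omega)
      | [x] => exact absurd hslen (by simp only [List.length_cons, List.length_nil]; omega)
      | x :: y :: t => exact ⟨x, y, t, rfl⟩
    have hxL : x ∈ flat L := hp.symm.subset (by simp)
    obtain ⟨u, L', hv, hp1⟩ := extract f g e hfc hgc hga x L hxL
    have hp2 : (u :: flat L').Perm (y :: t) :=
      (List.perm_cons x).mp (hp1.symm.trans hp)
    have hyt_sorted : (y :: t).Pairwise (· ≤ ·) := hsort.of_cons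
    have hyS : y ∈ flat L' ∨ y = u := by
      have hm : y ∈ u :: flat L' := hp2.symm.subset (by simp)
      rcases List.mem_cons.mp hm with h | h
      · exact Or.inr h
      · exact Or.inl h
    rcases hyS with hyL' | hyu
    · -- y in another pair
      obtain ⟨z, L'', hv2, hp3⟩ := extract f g e hfc hgc hga y L' hyL'
      have hz1 : z ∈ flat L' := hp3.symm.subset (by simp)
      have hzmem : z ∈ y :: t := hp2.subset (List.mem_cons_of_mem _ hz1)
      have humem : u ∈ y :: t := hp2.subset (by simp)
      have hxz : x ≤ z := List.rel_of_pairwise_cons hsort hzmem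
      have hyu2 : y ≤ u := by
        rcases List.mem_cons.mp humem with h | h
        · exact le_of_eq h.symm
        · exact List.rel_of_pairwise_cons hyt_sorted h
      have hxm : x ∈ Icc (0:ℝ) 1 := hIcc x (by simp)
      have hym : y ∈ Icc (0:ℝ) 1 := hIcc y (by simp)
      have hum : u ∈ Icc (0:ℝ) 1 := hIcc u (List.mem_cons_of_mem _ humem)
      have hzm : z ∈ Icc (0:ℝ) 1 := hIcc z (List.mem_cons_of_mem _ hzmem)
      have key : g (f x u) (f y z) ≤ g (f x y) (f u z) := by
        have hkey := hx x z y u hxm hzm hym hum hxz hyu2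
        rwa [hfc z y, hfc z u] at hkey
      have h4 : val f g e L = g (g (f x u) (f y z)) (val f g e L'') := by
        rw [hv, val_cons, hv2, val_cons, hga]
      have step : val f g e L ≤ g (f x y) (val f g e ((u, z) :: L'')) := by
        rw [h4, val_cons, ← hga]
        exact hgm _ _ _ key
      have hperm' : (flat ((u, z) :: L'')).Perm t := by
        rw [flat_cons]
        have h1 : (u :: y :: z :: flat L'').Perm (y :: t) :=
          (hp3.cons u).symm.trans hp2
        have h2 : (y :: u :: z :: flat L'').Perm (y :: t) :=
          (List.Perm.swap u y _).trans h1
        exact (List.perm_cons y).mp h2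
      have hlen : ((u, z) :: L'').length = m := by
        have e1 := hp1.length_eq
        have e2 := hp3.length_eq
        simp [flat_length, hL] at e1 e2
        simp
        omega
      have ihr := ih ((u, z) :: L'') t hlen
        (fun w hw => hIcc w (by simp [hw])) hyt_sorted.of_cons hperm'
      calc val f g e L ≤ g (f x y) (val f g e ((u, z) :: L'')) := step
        _ ≤ g (f x y) (val f g e (pairup t)) := by
            rw [hgc (f x y) (val f g e ((u,z)::L'')), hgc (f x y) (val f g e (pairup t))]
            exact hgm _ _ _ ihr
        _ = val f g e (pairup (x :: y :: t)) := by rw [pairup_cons, val_cons]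
    · -- y = u : pair (x,y) already together
      rw [← hyu] at hv hp2
      have hperm' : (flat L').Perm t := (List.perm_cons y).mp hp2
      have hlen : L'.length = m := by
        have e1 := hp1.length_eq
        simp [flat_length, hL] at e1
        omega
      have ihr := ih L' t hlen (fun w hw => hIcc w (by simp [hw]))
        hyt_sorted.of_cons hperm'
      calc val f g e L = g (f x y) (val f g e L') := by rw [hv, val_cons]
        _ ≤ g (f x y) (val f g e (pairup t)) := by
            rw [hgc (f x y) (val f g e L'), hgc (f x y) (val f g e (pairup t))]
            exact hgm _ _ _ ihr
        _ = val f g e (pairup (x :: y :: t)) := by rw [pairup_cons, val_cons]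

include hfc hgc hga hgm in
lemma core_lower
    (hx : ∀ x₁ x₂ y₁ y₂ : ℝ, x₁ ∈ Icc (0:ℝ) 1 → x₂ ∈ Icc (0:ℝ) 1 → y₁ ∈ Icc (0:ℝ) 1 →
      y₂ ∈ Icc (0:ℝ) 1 → x₁ ≤ x₂ → y₁ ≤ y₂ → g (f x₁ y₂) (f x₂ y₁) ≤ g (f x₁ y₁) (f x₂ y₂)) :
    ∀ (m : ℕ) (L : List (ℝ × ℝ)) (s : List ℝ), L.length = m →
      (∀ x ∈ s, x ∈ Icc (0:ℝ) 1) → s.Pairwise (· ≤ ·) → (flat L).Perm s →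
      val f g e (pairopp s) ≤ val f g e L := by
  intro m
  induction m with
  | zero =>
    intro L s hL _ _ hp
    rw [List.length_eq_zero_iff] at hL; subst hL
    have hs0 : s.length = 0 := hp.length_eq.symm
    rw [List.length_eq_zero_iff] at hs0
    subst hs0
    exact le_rfl
  | succ m ih =>
    intro L s hL hIcc hsort hp
    have hslen : s.length = 2 * (m+1) := by
      rw [← hp.length_eq, flat_length, hL]
    obtain ⟨x, tt, rfl⟩ : ∃ x tt, s = x :: tt := by
      match s with
      | [] => exact absurd hslen (by simp only [List.length_nil]; omega)
      | x :: tt => exact ⟨x, tt, rfl⟩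
    obtain ⟨r, w, hc⟩ : ∃ r w, tt = r ++ [w] := by
      rcases tt.eq_nil_or_concat with rfl | ⟨r, w, hc⟩
      · exact absurd hslen (by simp only [List.length_cons, List.length_nil]; omega)
      · rw [List.concat_eq_append] at hc
        exact ⟨r, w, hc⟩
    subst hc
    have httne : r ++ [w] ≠ ([] : List ℝ) := by simp
    have hwlast : (r ++ [w]).getLast httne = w := List.getLast_append _
    have htt_perm : (r ++ [w]).Perm (w :: r) := by
      have hcc := List.perm_append_comm (l₁ := r) (l₂ := [w])
      simpa using hcc
    have hmax : ∀ a ∈ x :: (r ++ [w]), a ≤ w := by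
      intro a hmem
      have hle := sorted_le_getLast (x :: (r ++ [w])) hsort a hmem (by simp)
      rwa [List.getLast_cons httne, hwlast] at hle
    have hxL : x ∈ flat L := hp.symm.subset (by simp)
    obtain ⟨u, L', hv, hp1⟩ := extract f g e hfc hgc hga x L hxL
    have hp2 : (u :: flat L').Perm (r ++ [w]) :=
      (List.perm_cons x).mp (hp1.symm.trans hp)
    have hr_sorted : r.Pairwise (· ≤ ·) := by
      have hs2 : (r ++ [w]).Pairwise (· ≤ ·) := hsort.of_cons
      exact hs2.sublist (List.sublist_append_left _ _)
    by_cases hu : u = w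
    · -- pair (x, w) already together
      rw [hu] at hv hp2
      have hperm' : (flat L').Perm r := by
        have hq : (w :: flat L').Perm (w :: r) := hp2.trans htt_perm
        exact (List.perm_cons w).mp hq
      have hlen : L'.length = m := by
        have e1 := hp1.length_eq
        simp [flat_length, hL] at e1
        omega
      have ihr := ih L' r hlen
        (fun v hvm => hIcc v (by simp [hvm])) hr_sorted hperm'
      calc val f g e (pairopp (x :: (r ++ [w]))) = g (f x w) (val f g e (pairopp r)) := by
            rw [pairopp_concat, val_cons]
        _ ≤ g (f x w) (val f g e L') := by
            rw [hgc (f x w) (val f g e (pairopp r)), hgc (f x w) (val f g e L')]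
            exact hgm _ _ _ ihr
        _ = val f g e L := by rw [hv, val_cons]
    · -- w in another pair
      have hwL' : w ∈ flat L' := by
        have hm : w ∈ u :: flat L' := hp2.symm.subset (by simp)
        rcases List.mem_cons.mp hm with h | h
        · exact absurd h.symm hu
        · exact h
      obtain ⟨z, L'', hv2, hp3⟩ := extract f g e hfc hgc hga w L' hwL'
      have hz1 : z ∈ flat L' := hp3.symm.subset (by simp)
      have hzmem : z ∈ r ++ [w] := hp2.subset (List.mem_cons_of_mem _ hz1)
      have humem : u ∈ r ++ [w] := hp2.subset (by simp)
      have hxz : x ≤ z := List.rel_of_pairwise_cons hsort hzmem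
      have huw : u ≤ w := hmax u (List.mem_cons_of_mem _ humem)
      have hxm : x ∈ Icc (0:ℝ) 1 := hIcc x (by simp)
      have hwm : w ∈ Icc (0:ℝ) 1 := hIcc w (by simp)
      have hum : u ∈ Icc (0:ℝ) 1 := hIcc u (List.mem_cons_of_mem _ humem)
      have hzm : z ∈ Icc (0:ℝ) 1 := hIcc z (List.mem_cons_of_mem _ hzmem)
      have key : g (f x w) (f z u) ≤ g (f x u) (f w z) := by
        have hkey := hx x z u w hxm hzm hum hwm hxz huw
        rwa [hfc z w] at hkey
      have h4 : val f g e L = g (g (f x u) (f w z)) (val f g e L'') := by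
        rw [hv, val_cons, hv2, val_cons, hga]
      have step : g (f x w) (val f g e ((z, u) :: L'')) ≤ val f g e L := by
        rw [h4, val_cons, ← hga]
        exact hgm _ _ _ key
      have hperm' : (flat ((z, u) :: L'')).Perm r := by
        rw [flat_cons]
        have h1 : (u :: w :: z :: flat L'').Perm (w :: r) :=
          ((hp3.cons u).symm.trans hp2).trans htt_perm
        have h2 : (w :: u :: z :: flat L'').Perm (w :: r) :=
          (List.Perm.swap u w _).trans h1
        have h3 : (u :: z :: flat L'').Perm r := (List.perm_cons w).mp h2
        exact (List.Perm.swap u z (flat L'')).trans h3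
      have hlen : ((z, u) :: L'').length = m := by
        have e1 := hp1.length_eq
        have e2 := hp3.length_eq
        simp [flat_length, hL] at e1 e2
        simp
        omega
      have ihr := ih ((z, u) :: L'') r hlen
        (fun v hvm => hIcc v (by simp [hvm])) hr_sorted hperm'
      calc val f g e (pairopp (x :: (r ++ [w]))) = g (f x w) (val f g e (pairopp r)) := by
            rw [pairopp_concat, val_cons]
        _ ≤ g (f x w) (val f g e ((z, u) :: L'')) := by
            rw [hgc (f x w) (val f g e (pairopp r)), hgc (f x w) (val f g e ((z,u)::L''))]
            exact hgm _ _ _ ihr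
        _ ≤ val f g e L := step

end Core

section Bridge

variable {F : ℝ → ℝ → ℝ}

/-- extend an operation on [0,1] to all of ℝ by clamping -/
def lift (F : ℝ → ℝ → ℝ) (x y : ℝ) : ℝ := F (cl x) (cl y)

lemma lift_mem (hF : IsUninorm F) (x y : ℝ) : lift F x y ∈ Icc (0:ℝ) 1 :=
  hF.1 _ (cl_mem x) _ (cl_mem y)

lemma lift_eq (hF : IsUninorm F) {x y : ℝ} (hx : x ∈ Icc (0:ℝ) 1) (hy : y ∈ Icc (0:ℝ) 1) :
    lift F x y = F x y := by
  unfold lift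
  rw [cl_eq_self hx, cl_eq_self hy]

lemma lift_comm (hF : IsUninorm F) (x y : ℝ) : lift F x y = lift F y x :=
  hF.2.1 _ (cl_mem x) _ (cl_mem y)

lemma lift_assoc (hF : IsUninorm F) (x y z : ℝ) :
    lift F (lift F x y) z = lift F x (lift F y z) := by
  unfold lift
  rw [cl_eq_self (hF.1 _ (cl_mem x) _ (cl_mem y)), cl_eq_self (hF.1 _ (cl_mem y) _ (cl_mem z))]
  exact hF.2.2.1 _ (cl_mem x) _ (cl_mem y) _ (cl_mem z)

lemma lift_mono (hF : IsUninorm F) (x y z : ℝ) (h : x ≤ y) : lift F x z ≤ lift F y z :=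
  hF.2.2.2.1 _ (cl_mem x) _ (cl_mem y) _ (cl_mem z) (cl_mono h)

variable {ot op : ℝ → ℝ → ℝ}

lemma val_mem (hot : IsUninorm ot) (hop : IsUninorm op) {e : ℝ} (he : e ∈ Icc (0:ℝ) 1)
    (L : List (ℝ × ℝ)) : val (lift ot) (lift op) e L ∈ Icc (0:ℝ) 1 := by
  induction L with
  | nil => exact he
  | cons p L ih => exact lift_mem hop _ _

lemma val_append (hot : IsUninorm ot) (hop : IsUninorm op) {e : ℝ} (he : e ∈ Icc (0:ℝ) 1)
    (hide : ∀ x ∈ Icc (0:ℝ) 1, op x e = x) (L₁ L₂ : List (ℝ × ℝ)) :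
    val (lift ot) (lift op) e (L₁ ++ L₂) =
      lift op (val (lift ot) (lift op) e L₁) (val (lift ot) (lift op) e L₂) := by
  induction L₁ with
  | nil =>
    show val (lift ot) (lift op) e L₂ = lift op e (val (lift ot) (lift op) e L₂)
    rw [lift_comm hop, lift_eq hop (val_mem hot hop he L₂) he,
      hide _ (val_mem hot hop he L₂)]
  | cons p L₁ ih =>
    show lift op (lift ot p.1 p.2) (val (lift ot) (lift op) e (L₁ ++ L₂)) = _
    rw [ih, ← lift_assoc hop]
    rfl

lemma iterOp_eq_val (hot : IsUninorm ot) (hop : IsUninorm op) {e : ℝ} (he : e ∈ Icc (0:ℝ) 1)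
    (hide : ∀ x ∈ Icc (0:ℝ) 1, op x e = x) :
    ∀ (n : ℕ) (w : Fin (n+1) → ℝ × ℝ), (∀ i, (w i).1 ∈ Icc (0:ℝ) 1) →
      (∀ i, (w i).2 ∈ Icc (0:ℝ) 1) →
      iterOp op n (fun i => ot (w i).1 (w i).2) =
        val (lift ot) (lift op) e (List.ofFn w) := by
  have single : ∀ (p : ℝ × ℝ), p.1 ∈ Icc (0:ℝ) 1 → p.2 ∈ Icc (0:ℝ) 1 →
      val (lift ot) (lift op) e [p] = ot p.1 p.2 := by
    intro p hp1 hp2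
    show lift op (lift ot p.1 p.2) e = ot p.1 p.2
    rw [lift_eq hot hp1 hp2, lift_eq hop (hot.1 _ hp1 _ hp2) he, hide _ (hot.1 _ hp1 _ hp2)]
  intro n
  induction n with
  | zero =>
    intro w h1 h2
    show ot (w 0).1 (w 0).2 = val (lift ot) (lift op) e (List.ofFn w)
    rw [List.ofFn_succ, List.ofFn_zero, single (w 0) (h1 0) (h2 0)]
  | succ n ih =>
    intro w h1 h2
    show op (iterOp op n (fun i => ot (w i.castSucc).1 (w i.castSucc).2))
        (ot (w (Fin.last (n+1))).1 (w (Fin.last (n+1))).2) = _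
    rw [ih (fun i => w i.castSucc) (fun i => h1 _) (fun i => h2 _),
      List.ofFn_succ' w, List.concat_eq_append, val_append hot hop he hide,
      single (w (Fin.last (n+1))) (h1 _) (h2 _)]
    rw [lift_eq hop (val_mem hot hop he _) (hot.1 _ (h1 _) _ (h2 _))]

end Bridge

lemma pairup_eq : ∀ (m : ℕ) (l : List ℝ) (h : l.length = 2 * m),
    pairup l = List.ofFn (fun i : Fin m =>
      (l[2 * i.1]'(by have := i.isLt; omega), l[2 * i.1 + 1]'(by have := i.isLt; omega))) := by
  intro m
  induction m with
  | zero =>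
    intro l h
    rw [Nat.mul_zero, List.length_eq_zero_iff] at h
    subst h
    rfl
  | succ m ih =>
    intro l h
    match l with
    | x :: y :: t =>
      have ht : t.length = 2 * m := by simp at h; omega
      rw [pairup_cons, ih t ht]
      apply List.ext_getElem (by simp)
      intro i h1 h2
      rw [List.getElem_ofFn]
      match i with
      | 0 => simp
      | j + 1 =>
        have hj : j < m := by simpa using h1
        simp only [List.getElem_cons_succ, List.getElem_ofFn]
        have e1 : 2 * ((⟨j + 1, by simpa using h2⟩ : Fin (m + 1)) : ℕ) = 2 * j + 1 + 1 := by
          simp; omega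
        have e2 : 2 * ((⟨j + 1, by simpa using h2⟩ : Fin (m + 1)) : ℕ) + 1 = 2 * j + 1 + 1 + 1 := by
          simp; omega
        simp only [e1, e2, List.getElem_cons_succ]

set_option maxHeartbeats 1000000 in
lemma pairopp_eq : ∀ (m : ℕ) (l : List ℝ) (h : l.length = 2 * m),
    pairopp l = List.ofFn (fun i : Fin m =>
      (l[i.1]'(by have := i.isLt; omega), l[2 * m - 1 - i.1]'(by have := i.isLt; omega))) := by
  intro m
  induction m with
  | zero =>
    intro l h
    rw [Nat.mul_zero, List.length_eq_zero_iff] at h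
    subst h
    rfl
  | succ m ih =>
    intro l h
    match l with
    | x :: tt =>
      obtain ⟨r, w, hc⟩ : ∃ r w, tt = r ++ [w] := by
        rcases tt.eq_nil_or_concat with rfl | ⟨r, w, hc⟩
        · exact absurd h (by simp only [List.length_cons, List.length_nil]; omega)
        · rw [List.concat_eq_append] at hc
          exact ⟨r, w, hc⟩
      subst hc
      have hr : r.length = 2 * m := by simp at h; omega
      rw [pairopp_concat, ih r hr]
      apply List.ext_getElem (by simp)
      intro i h1 h2
      rw [List.getElem_ofFn]
      match i with
      | 0 =>
        have e0 : 2 * (m + 1) - 1 - ((⟨0, by simpa using h2⟩ : Fin (m + 1)) : ℕ) = r.length + 1 := by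
          simp [hr]
          omega
        simp only [List.getElem_cons_zero, e0, List.getElem_cons_succ]
        have hw : (r ++ [w])[r.length]'(by simp) = w :=
          List.getElem_concat_length rfl _
        simp [hw]
      | j + 1 =>
        have hj : j < m := by simpa using h1
        simp only [List.getElem_cons_succ, List.getElem_ofFn]
        have e1 : ((⟨j + 1, by simpa using h2⟩ : Fin (m + 1)) : ℕ) = j + 1 := rfl
        have e2 : 2 * (m + 1) - 1 - ((⟨j + 1, by simpa using h2⟩ : Fin (m + 1)) : ℕ) = (2 * m - 1 - j) + 1 := by
          simp
          omega
        simp only [e1, e2, List.getElem_cons_succ]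
        congr 1
        · rw [List.getElem_append_left (by omega)]
        · rw [List.getElem_append_left (by omega)]

end RearrangeAux


open RearrangeAux in
theorem rearrangement_variant_pairs (ot op : ℝ → ℝ → ℝ)
    (hot : IsUninorm ot) (hop : IsUninorm op)
    (hcond : ∀ x₁ x₂ y₁ y₂ : ℝ, 0 ≤ x₁ → x₁ ≤ x₂ → x₂ ≤ 1 → 0 ≤ y₁ → y₁ ≤ y₂ → y₂ ≤ 1 →
      op (ot x₁ y₂) (ot x₂ y₁) ≤ op (ot x₁ y₁) (ot x₂ y₂))
    (n : ℕ) (a b : Fin (2 * (n + 1)) → ℝ)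
    (ha : ∀ i, a i ∈ Icc (0:ℝ) 1)
    (hb : Monotone b)
    (hperm : ∃ σ : Equiv.Perm (Fin (2 * (n + 1))), b = a ∘ σ) :
    iterOp op n (fun i : Fin (n+1) =>
        ot (b ⟨i.1, by have := i.isLt; omega⟩)
           (b ⟨2 * (n + 1) - 1 - i.1, by have := i.isLt; omega⟩)) ≤
      iterOp op n (fun i : Fin (n+1) =>
        ot (a ⟨2 * i.1, by have := i.isLt; omega⟩)
           (a ⟨2 * i.1 + 1, by have := i.isLt; omega⟩)) ∧
    iterOp op n (fun i : Fin (n+1) =>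
        ot (a ⟨2 * i.1, by have := i.isLt; omega⟩)
           (a ⟨2 * i.1 + 1, by have := i.isLt; omega⟩)) ≤
      iterOp op n (fun i : Fin (n+1) =>
        ot (b ⟨2 * i.1, by have := i.isLt; omega⟩)
           (b ⟨2 * i.1 + 1, by have := i.isLt; omega⟩)) := by
  classical
  obtain ⟨σ, hσ⟩ := hperm
  obtain ⟨eop, heop, hide⟩ := hop.2.2.2.2
  have hbIcc : ∀ i, b i ∈ Icc (0:ℝ) 1 := by
    intro i; rw [hσ]; exact ha _
  -- the three pairing functions
  set wA : Fin (n+1) → ℝ × ℝ := fun i =>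
    (a ⟨2 * i.1, by have := i.isLt; omega⟩, a ⟨2 * i.1 + 1, by have := i.isLt; omega⟩) with hwA
  set wB : Fin (n+1) → ℝ × ℝ := fun i =>
    (b ⟨2 * i.1, by have := i.isLt; omega⟩, b ⟨2 * i.1 + 1, by have := i.isLt; omega⟩) with hwB
  set wO : Fin (n+1) → ℝ × ℝ := fun i =>
    (b ⟨i.1, by have := i.isLt; omega⟩, b ⟨2 * (n + 1) - 1 - i.1, by have := i.isLt; omega⟩) with hwO
  -- perm of value lists
  have hperm_ab : (List.ofFn a).Perm (List.ofFn b) := by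
    rw [hσ]
    have h1 : List.ofFn (a ∘ σ) = (List.ofFn (σ : Fin (2*(n+1)) → Fin (2*(n+1)))).map a :=
      List.map_ofFn.symm
    have h2 : (List.ofFn (σ : Fin (2*(n+1)) → Fin (2*(n+1)))).Perm (List.finRange (2*(n+1))) := by
      apply List.perm_of_nodup_nodup_toFinset_eq (List.nodup_ofFn.mpr σ.injective)
        (List.nodup_finRange (2*(n+1)))
      ext x
      simp only [List.mem_toFinset, List.mem_finRange, iff_true, List.mem_ofFn]
      exact ⟨σ.symm x, σ.apply_symm_apply x⟩
    have h3 : (List.ofFn a) = (List.finRange (2*(n+1))).map a := List.ofFn_eq_map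
    rw [h3, h1]
    exact (h2.map a).symm
  have hsort : (List.ofFn b).Pairwise (· ≤ ·) := (List.sortedLE_ofFn_iff.mpr hb).pairwise
  have hIccs : ∀ x ∈ List.ofFn b, x ∈ Icc (0:ℝ) 1 := by
    intro x hx
    obtain ⟨i, hi⟩ := Set.mem_range.mp ((List.mem_ofFn' _ _).mp hx)
    rw [← hi]; exact hbIcc i
  -- exchange condition for lifted operations
  have hx' : ∀ x₁ x₂ y₁ y₂ : ℝ, x₁ ∈ Icc (0:ℝ) 1 → x₂ ∈ Icc (0:ℝ) 1 → y₁ ∈ Icc (0:ℝ) 1 →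
      y₂ ∈ Icc (0:ℝ) 1 → x₁ ≤ x₂ → y₁ ≤ y₂ →
      lift op (lift ot x₁ y₂) (lift ot x₂ y₁) ≤ lift op (lift ot x₁ y₁) (lift ot x₂ y₂) := by
    intro x₁ x₂ y₁ y₂ hx1 hx2 hy1 hy2 hxx hyy
    rw [lift_eq hot hx1 hy2, lift_eq hot hx2 hy1, lift_eq hot hx1 hy1, lift_eq hot hx2 hy2,
      lift_eq hop (hot.1 _ hx1 _ hy2) (hot.1 _ hx2 _ hy1),
      lift_eq hop (hot.1 _ hx1 _ hy1) (hot.1 _ hx2 _ hy2)]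
    exact hcond x₁ x₂ y₁ y₂ hx1.1 hxx hx2.2 hy1.1 hyy hy2.2
  -- list identities
  have eA : pairup (List.ofFn a) = List.ofFn wA := by
    rw [pairup_eq (n+1) (List.ofFn a) (by simp only [List.length_ofFn])]
    congr 1
    funext i
    rw [hwA]
    exact Prod.ext (List.getElem_ofFn ..) (List.getElem_ofFn ..)
  have eB : pairup (List.ofFn b) = List.ofFn wB := by
    rw [pairup_eq (n+1) (List.ofFn b) (by simp only [List.length_ofFn])]
    congr 1
    funext i
    rw [hwB]
    exact Prod.ext (List.getElem_ofFn ..) (List.getElem_ofFn ..)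
  have eO : pairopp (List.ofFn b) = List.ofFn wO := by
    rw [pairopp_eq (n+1) (List.ofFn b) (by simp only [List.length_ofFn])]
    congr 1
    funext i
    rw [hwO]
    exact Prod.ext (List.getElem_ofFn ..) (List.getElem_ofFn ..)
  have hfa : flat (List.ofFn wA) = List.ofFn a := by
    rw [← eA, flat_pairup (n+1) _ (by simp only [List.length_ofFn])]
  have hflatperm : (flat (List.ofFn wA)).Perm (List.ofFn b) := by
    rw [hfa]; exact hperm_ab
  -- bridges
  have bA : iterOp op n (fun i : Fin (n+1) =>
        ot (a ⟨2 * i.1, by have := i.isLt; omega⟩)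
           (a ⟨2 * i.1 + 1, by have := i.isLt; omega⟩)) =
      val (lift ot) (lift op) eop (List.ofFn wA) :=
    iterOp_eq_val hot hop heop hide n wA (fun i => ha _) (fun i => ha _)
  have bB : iterOp op n (fun i : Fin (n+1) =>
        ot (b ⟨2 * i.1, by have := i.isLt; omega⟩)
           (b ⟨2 * i.1 + 1, by have := i.isLt; omega⟩)) =
      val (lift ot) (lift op) eop (List.ofFn wB) :=
    iterOp_eq_val hot hop heop hide n wB (fun i => hbIcc _) (fun i => hbIcc _)
  have bO : iterOp op n (fun i : Fin (n+1) =>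
        ot (b ⟨i.1, by have := i.isLt; omega⟩)
           (b ⟨2 * (n + 1) - 1 - i.1, by have := i.isLt; omega⟩)) =
      val (lift ot) (lift op) eop (List.ofFn wO) :=
    iterOp_eq_val hot hop heop hide n wO (fun i => hbIcc _) (fun i => hbIcc _)
  constructor
  · rw [bO, bA, ← eO]
    exact core_lower (lift ot) (lift op) eop (lift_comm hot) (lift_comm hop) (lift_assoc hop)
      (lift_mono hop) hx' (n+1) (List.ofFn wA) (List.ofFn b) (by simp only [List.length_ofFn]) hIccs hsort hflatperm
  · rw [bA, bB, ← eB]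
    exact core_upper (lift ot) (lift op) eop (lift_comm hot) (lift_comm hop) (lift_assoc hop)
      (lift_mono hop) hx' (n+1) (List.ofFn wA) (List.ofFn b) (by simp only [List.length_ofFn]) hIccs hsort hflatperm
end
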